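/- arXiv:1011.1820 — 11 statements merged into one kernel-verified Lean document; each statement's English description precedes it below -/
import Mathlib

section
/- Let A and B be unital K-algebras, with A associative and B associative and commutative, and let R : B⊗A → A⊗B be an alternative twisting map (with respect to a fixed decomposition A = K·1_A ⊕ A₀). Then the multiplication of the alternative twisted tensor product A⊗̄_R B is given on all tensor monomials by (a⊗b)(a'⊗b') = a a'_R ⊗ b_R b', and A⊗̄_R B is an associative algebra. -/
open TensorProduct LinearMap
set_option synthInstance.maxHeartbeats 1000000

section TwistPreamble

variable (K : Type*) [Field K]
variable (A : Type*) [NonAssocRing A] [Module K A] [SMulCommClass K A A] [IsScalarTower K A A]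
variable (B : Type*) [NonAssocRing B] [Module K B] [SMulCommClass K B B] [IsScalarTower K B B]

/-- Sweedler helper: sends `Σ aR ⊗ bR` in `A ⊗ B` to `Σ (aR * a'_r) ⊗ (bR)_r`,
where `R((bR) ⊗ a') = a'_r ⊗ (bR)_r`. -/
noncomputable def attpRmul (R : B ⊗[K] A →ₗ[K] A ⊗[K] B) (a' : A) :
    A ⊗[K] B →ₗ[K] A ⊗[K] B :=
  (rTensor B (LinearMap.mul' K A)) ∘ₗ (TensorProduct.assoc K A A B).symm.toLinearMap ∘ₗ
    (lTensor A (R ∘ₗ (TensorProduct.mk K B A).flip a'))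

/-- Sweedler helper: sends `Σ aR ⊗ b'R` in `A ⊗ B` to `Σ (aR)_r ⊗ (b'R * b_r)`,
where `R(b ⊗ aR) = (aR)_r ⊗ b_r`. -/
noncomputable def attpLmul (R : B ⊗[K] A →ₗ[K] A ⊗[K] B) (b : B) :
    A ⊗[K] B →ₗ[K] A ⊗[K] B :=
  (lTensor A ((LinearMap.mul' K B) ∘ₗ (TensorProduct.comm K B B).toLinearMap)) ∘ₗ
    (TensorProduct.assoc K A B B).toLinearMap ∘ₗ
    (rTensor B (R ∘ₗ (TensorProduct.mk K B A) b))

/-- `R : B ⊗ A → A ⊗ B` is an alternative twisting map w.r.t. the decomposition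
`A = K·1_A ⊕ A₀`. -/
def IsAltTwistingMap (A₀ : Submodule K A) (R : B ⊗[K] A →ₗ[K] A ⊗[K] B) : Prop :=
  (∀ a : A, R ((1 : B) ⊗ₜ[K] a) = a ⊗ₜ[K] (1 : B)) ∧
  (∀ b : B, R (b ⊗ₜ[K] (1 : A)) = (1 : A) ⊗ₜ[K] b) ∧
  (∀ (a a' : A) (b : B), R (b ⊗ₜ[K] (a * a')) = attpRmul K A B R a' (R (b ⊗ₜ[K] a))) ∧
  (∀ a ∈ A₀, ∀ b b' : B, R ((b * b') ⊗ₜ[K] a) = attpLmul K A B R b (R (b' ⊗ₜ[K] a)))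

/-- `m` is the multiplication of the alternative twisted tensor product `A ⊗̄_R B`:
`(1⊗b)(a'⊗b') = a'_R ⊗ b_R b'` and, for `a ∈ A₀`, `(a⊗b)(a'⊗b') = a a'_R ⊗ b' b_R`. -/
def IsAltMul (A₀ : Submodule K A) (R : B ⊗[K] A →ₗ[K] A ⊗[K] B)
    (m : A ⊗[K] B →ₗ[K] A ⊗[K] B →ₗ[K] A ⊗[K] B) : Prop :=
  (∀ (b : B) (a' : A) (b' : B),
      m ((1 : A) ⊗ₜ[K] b) (a' ⊗ₜ[K] b') = (lTensor A (mulRight K b')) (R (b ⊗ₜ[K] a'))) ∧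
  (∀ a ∈ A₀, ∀ (b : B) (a' : A) (b' : B),
      m (a ⊗ₜ[K] b) (a' ⊗ₜ[K] b') =
        (TensorProduct.map (mulLeft K a) (mulLeft K b')) (R (b ⊗ₜ[K] a')))

end TwistPreamble
section AuxTwist
variable (K : Type*) [Field K]
variable (A : Type*) [NonAssocRing A] [Module K A] [SMulCommClass K A A] [IsScalarTower K A A]
variable (B : Type*) [NonAssocRing B] [Module K B] [SMulCommClass K B B] [IsScalarTower K B B]
variable (R : B ⊗[K] A →ₗ[K] A ⊗[K] B)

lemma attpLmul_tmul (b : B) (p : A) (q : B) :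
    attpLmul K A B R b (p ⊗ₜ[K] q) = lTensor A (mulLeft K q) (R (b ⊗ₜ[K] p)) := by
  simp only [attpLmul, LinearMap.comp_apply, rTensor_tmul, mk_apply, LinearEquiv.coe_coe]
  generalize R (b ⊗ₜ[K] p) = w
  induction w using TensorProduct.induction_on with
  | zero => simp
  | tmul s t => simp [mul'_apply]
  | add u v hu hv => simp only [add_tmul, map_add, LinearEquiv.coe_coe, hu, hv]

lemma attpRmul_tmul (a' : A) (x : A) (y : B) :
    attpRmul K A B R a' (x ⊗ₜ[K] y) = rTensor B (mulLeft K x) (R (y ⊗ₜ[K] a')) := by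
  simp only [attpRmul, LinearMap.comp_apply, lTensor_tmul, mk_apply, flip_apply,
    LinearEquiv.coe_coe]
  generalize R (y ⊗ₜ[K] a') = w
  induction w using TensorProduct.induction_on with
  | zero => simp only [tmul_zero, map_zero]
  | tmul s t => simp [mul'_apply]
  | add u v hu hv => simp only [tmul_add, map_add, LinearEquiv.coe_coe, hu, hv]

/-- The canonical `R`-twisted multiplication map on `(A⊗B)⊗(A⊗B)`. -/
noncomputable def attpMu : (A ⊗[K] B) ⊗[K] (A ⊗[K] B) →ₗ[K] A ⊗[K] B :=
  (rTensor B (LinearMap.mul' K A)) ∘ₗ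
  (TensorProduct.assoc K A A B).symm.toLinearMap ∘ₗ
  (lTensor A ((lTensor A (LinearMap.mul' K B)) ∘ₗ (TensorProduct.assoc K A B B).toLinearMap)) ∘ₗ
  (lTensor A (rTensor B R)) ∘ₗ
  (lTensor A (TensorProduct.assoc K B A B).symm.toLinearMap) ∘ₗ
  (TensorProduct.assoc K A B (A ⊗[K] B)).toLinearMap

lemma attpMu_tmul (x p : A) (y q : B) :
    attpMu K A B R ((x ⊗ₜ[K] y) ⊗ₜ[K] (p ⊗ₜ[K] q)) =
      TensorProduct.map (mulLeft K x) (mulRight K q) (R (y ⊗ₜ[K] p)) := by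
  simp only [attpMu, LinearMap.comp_apply, LinearEquiv.coe_coe, assoc_tmul,
    lTensor_tmul, assoc_symm_tmul, rTensor_tmul]
  generalize R (y ⊗ₜ[K] p) = w
  induction w using TensorProduct.induction_on with
  | zero => simp only [zero_tmul, map_zero, tmul_zero]
  | tmul s t => simp [mul'_apply]
  | add u v hu hv => simp only [add_tmul, map_add, tmul_add, hu, hv]

end AuxTwist
/-- if `A` is associative and `B` is associative and commutative, the
multiplication of `A ⊗̄_R B` is given on all tensor monomials by
`(a⊗b)(a'⊗b') = a a'_R ⊗ b_R b'`, and `A ⊗̄_R B` is associative. -/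
theorem stmt0 (K A B : Type*) [Field K]
    [NonAssocRing A] [Module K A] [SMulCommClass K A A] [IsScalarTower K A A]
    [NonAssocRing B] [Module K B] [SMulCommClass K B B] [IsScalarTower K B B]
    (hAassoc : ∀ x y z : A, x * y * z = x * (y * z))
    (hBassoc : ∀ x y z : B, x * y * z = x * (y * z))
    (hBcomm : ∀ x y : B, x * y = y * x)
    (A₀ : Submodule K A) (hdec : IsCompl (Submodule.span K {(1 : A)}) A₀)
    (R : B ⊗[K] A →ₗ[K] A ⊗[K] B) (hR : IsAltTwistingMap K A B A₀ R)
    (m : A ⊗[K] B →ₗ[K] A ⊗[K] B →ₗ[K] A ⊗[K] B) (hm : IsAltMul K A B A₀ R m) :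
    (∀ (a : A) (b : B) (a' : A) (b' : B),
        m (a ⊗ₜ[K] b) (a' ⊗ₜ[K] b') =
          (TensorProduct.map (mulLeft K a) (mulRight K b')) (R (b ⊗ₜ[K] a'))) ∧
    (∀ x y z : A ⊗[K] B, m (m x y) z = m x (m y z)) := by
  -- decomposition of an arbitrary element of A
  have hdecomp : ∀ a : A, ∃ k : K, ∃ t ∈ A₀, a = k • (1 : A) + t := by
    intro a
    have ha : a ∈ Submodule.span K {(1 : A)} ⊔ A₀ := by
      rw [hdec.sup_eq_top]; trivial
    obtain ⟨s, hs, t, ht, h⟩ := Submodule.mem_sup.mp ha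
    obtain ⟨k, rfl⟩ := Submodule.mem_span_singleton.mp hs
    exact ⟨k, t, ht, h.symm⟩
  have hML1 : mulLeft K (1 : A) = LinearMap.id := by
    ext z; simp
  have hMLR : ∀ d : B, mulLeft K d = mulRight K d := by
    intro d; ext z; simp [hBcomm d z]
  -- Part 1: the multiplication formula on all tensor monomials
  have part1 : ∀ (a : A) (b : B) (a' : A) (b' : B),
      m (a ⊗ₜ[K] b) (a' ⊗ₜ[K] b') =
        (TensorProduct.map (mulLeft K a) (mulRight K b')) (R (b ⊗ₜ[K] a')) := by
    intro a b a' b'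
    obtain ⟨k, t, ht, rfl⟩ := hdecomp a
    have hML : mulLeft K (k • (1 : A) + t) = k • LinearMap.id + mulLeft K t := by
      ext z
      simp [add_mul, smul_mul_assoc]
    rw [hML, TensorProduct.map_add_left, TensorProduct.map_smul_left]
    rw [add_tmul, ← smul_tmul']
    rw [map_add, LinearMap.add_apply, map_smul, LinearMap.smul_apply]
    rw [hm.1 b a' b', hm.2 t ht b a' b', ← hMLR b']
    rfl
  refine ⟨part1, ?_⟩
  -- extension of the left twisting condition to all of A
  have T4all : ∀ (a : A) (b b' : B),
      R ((b * b') ⊗ₜ[K] a) = attpLmul K A B R b (R (b' ⊗ₜ[K] a)) := by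
    intro a b b'
    obtain ⟨k, t, ht, rfl⟩ := hdecomp a
    rw [tmul_add, tmul_smul, map_add, map_smul, tmul_add, tmul_smul,
      map_add, map_smul, map_add, map_smul]
    rw [hR.2.2.2 t ht b b', hR.2.1 (b * b'), hR.2.1 b']
    congr 1
    rw [attpLmul_tmul, hR.2.1 b]
    simp [hBcomm b' b]
  -- key lemma I
  have LI : ∀ (a : A) (b' : B) (a'' : A) (b'' : B) (u : A ⊗[K] B),
      m (TensorProduct.map (mulLeft K a) (mulRight K b') u) (a'' ⊗ₜ[K] b'') =
        TensorProduct.map (mulLeft K a) (mulRight K b'')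
          (attpMu K A B R (u ⊗ₜ[K] R (b' ⊗ₜ[K] a''))) := by
    intro a b' a'' b'' u
    induction u using TensorProduct.induction_on with
    | zero => simp
    | add u v hu hv =>
        simp only [map_add, LinearMap.add_apply, add_tmul, hu, hv]
    | tmul x y =>
        rw [TensorProduct.map_tmul, mulLeft_apply, mulRight_apply,
          part1 (a * x) (y * b') a'' b'', T4all a'' y b']
        generalize R (b' ⊗ₜ[K] a'') = v
        induction v using TensorProduct.induction_on with
        | zero => simp
        | add v w hv hw => simp only [map_add, tmul_add, hv, hw]
        | tmul p q =>
            rw [attpLmul_tmul, attpMu_tmul]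
            generalize R (y ⊗ₜ[K] p) = w
            induction w using TensorProduct.induction_on with
            | zero => simp
            | add w w' h1 h2 => simp only [map_add, h1, h2]
            | tmul s t =>
                simp only [lTensor_tmul, TensorProduct.map_tmul, mulLeft_apply,
                  mulRight_apply]
                rw [hAassoc a x s, hBcomm q t]
  -- key lemma II
  have LII : ∀ (a : A) (b : B) (a' : A) (b'' : B) (v : A ⊗[K] B),
      m (a ⊗ₜ[K] b) (TensorProduct.map (mulLeft K a') (mulRight K b'') v) =
        TensorProduct.map (mulLeft K a) (mulRight K b'')
          (attpMu K A B R (R (b ⊗ₜ[K] a') ⊗ₜ[K] v)) := by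
    intro a b a' b'' v
    induction v using TensorProduct.induction_on with
    | zero => simp
    | add v w hv hw => simp only [map_add, tmul_add, hv, hw]
    | tmul p q =>
        rw [TensorProduct.map_tmul, mulLeft_apply, mulRight_apply,
          part1 a b (a' * p) (q * b''), hR.2.2.1 a' p b]
        generalize R (b ⊗ₜ[K] a') = u
        induction u using TensorProduct.induction_on with
        | zero => simp
        | add u w hu hw => simp only [map_add, add_tmul, hu, hw]
        | tmul x y =>
            rw [attpRmul_tmul, attpMu_tmul]
            generalize R (y ⊗ₜ[K] p) = w
            induction w using TensorProduct.induction_on with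
            | zero => simp
            | add w w' h1 h2 => simp only [map_add, h1, h2]
            | tmul s t =>
                simp only [rTensor_tmul, TensorProduct.map_tmul, mulLeft_apply,
                  mulRight_apply]
                rw [hBassoc t q b'']
  -- associativity
  intro x y z
  induction x using TensorProduct.induction_on with
  | zero => simp
  | add x x' h1 h2 => simp only [map_add, LinearMap.add_apply, h1, h2]
  | tmul a b =>
    induction y using TensorProduct.induction_on with
    | zero => simp
    | add y y' h1 h2 => simp only [map_add, LinearMap.add_apply, h1, h2]
    | tmul a' b' =>
      induction z using TensorProduct.induction_on with
      | zero => simp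
      | add z z' h1 h2 => simp only [map_add, h1, h2]
      | tmul a'' b'' =>
        rw [part1 a b a' b', part1 a' b' a'' b'', LI a b' a'' b'' (R (b ⊗ₜ[K] a')),
          LII a b a' b'' (R (b' ⊗ₜ[K] a''))]
end

section
/- Let B be a unital (not necessarily associative) K-algebra with an involution σ, and let q∈K, q≠0. Then the linear map R : B⊗C(K,q) → C(K,q)⊗B uniquely defined by R(b⊗1) = 1⊗b and R(b⊗v) = v⊗σ(b) for all b∈B is an alternative twisting map (with respect to the decomposition C(K,q) = K·1 ⊕ K·v). -/
open TensorProduct LinearMap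

set_option maxHeartbeats 1600000 in
/-- for an algebra `B` with involution `σ` and `q ≠ 0`, the linear map
`R : B ⊗ C(K,q) → C(K,q) ⊗ B` with `R(b⊗1) = 1⊗b`, `R(b⊗v) = v⊗σ(b)` is an
alternative twisting map w.r.t. the decomposition `C(K,q) = K·1 ⊕ K·v`. -/
theorem stmt2 (K B : Type*) [Field K]
    [NonAssocRing B] [Module K B] [SMulCommClass K B B] [IsScalarTower K B B]
    (σ : B →ₗ[K] B) (hσmul : ∀ x y : B, σ (x * y) = σ y * σ x)
    (hσone : σ 1 = 1) (hσinv : ∀ x : B, σ (σ x) = x)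
    (q : K) (hq : q ≠ 0)
    (R : B ⊗[K] (AdjoinRoot (Polynomial.X ^ 2 - Polynomial.C q)) →ₗ[K]
         (AdjoinRoot (Polynomial.X ^ 2 - Polynomial.C q)) ⊗[K] B)
    (hR1 : ∀ b : B,
      R (b ⊗ₜ[K] (1 : AdjoinRoot (Polynomial.X ^ 2 - Polynomial.C q))) = 1 ⊗ₜ[K] b)
    (hRv : ∀ b : B,
      R (b ⊗ₜ[K] AdjoinRoot.root (Polynomial.X ^ 2 - Polynomial.C q)) =
        (AdjoinRoot.root (Polynomial.X ^ 2 - Polynomial.C q)) ⊗ₜ[K] σ b) :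
    IsAltTwistingMap K (AdjoinRoot (Polynomial.X ^ 2 - Polynomial.C q)) B
      (Submodule.span K ({AdjoinRoot.root (Polynomial.X ^ 2 - Polynomial.C q)} :
        Set (AdjoinRoot (Polynomial.X ^ 2 - Polynomial.C q)))) R := by
  classical
  set C := AdjoinRoot (Polynomial.X ^ 2 - Polynomial.C q) with hC
  set v : C := AdjoinRoot.root (Polynomial.X ^ 2 - Polynomial.C q) with hv
  -- v * v = q • 1
  have hv2 : v * v = q • (1 : C) := by
    have h := AdjoinRoot.eval₂_root (Polynomial.X ^ 2 - Polynomial.C q)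
    simp [sub_eq_zero] at h
    rw [hv, ← pow_two, h, Algebra.smul_def, mul_one]
    rfl
  -- every element of C is c0 • 1 + c1 • v
  have hrep : ∀ a : C, ∃ c0 c1 : K, a = c0 • 1 + c1 • v := by
    intro a
    obtain ⟨p, rfl⟩ := AdjoinRoot.mk_surjective a
    set f : Polynomial K := Polynomial.X ^ 2 - Polynomial.C q with hf
    have hm : f.Monic := Polynomial.monic_X_pow_sub_C q two_ne_zero
    have hdf : f.degree = 2 := by rw [hf]; compute_degree!
    have hmk : AdjoinRoot.mk f p = AdjoinRoot.mk f (p %ₘ f) := by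
      rw [eq_comm, AdjoinRoot.mk_eq_mk]
      exact ⟨-(p /ₘ f), by rw [Polynomial.modByMonic_eq_sub_mul_div p f]; ring⟩
    have hd : (p %ₘ f).degree ≤ 1 := by
      have := Polynomial.degree_modByMonic_lt p hm
      rw [hdf] at this
      exact Order.le_of_lt_succ (by exact_mod_cast this)
    refine ⟨(p %ₘ f).coeff 0, (p %ₘ f).coeff 1, ?_⟩
    conv_lhs => rw [hmk, Polynomial.eq_X_add_C_of_degree_le_one hd]
    rw [map_add, map_mul, AdjoinRoot.mk_X, AdjoinRoot.mk_C, AdjoinRoot.mk_C,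
      Algebra.smul_def, Algebra.smul_def, mul_one, AdjoinRoot.algebraMap_eq, add_comm]
  refine ⟨?_, ?_, ?_, ?_⟩
  · intro a
    obtain ⟨c0, c1, rfl⟩ := hrep a
    rw [TensorProduct.tmul_add, TensorProduct.tmul_smul, TensorProduct.tmul_smul,
      map_add, map_smul, map_smul, hR1, hRv, hσone,
      TensorProduct.add_tmul, TensorProduct.smul_tmul', TensorProduct.smul_tmul']
  · intro b
    exact hR1 b
  · intro a a' b
    obtain ⟨c0, c1, rfl⟩ := hrep a
    obtain ⟨d0, d1, rfl⟩ := hrep a'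
    have hexp : (c0 • (1 : C) + c1 • v) * (d0 • 1 + d1 • v)
        = (c0 * d0 + q * (c1 * d1)) • (1 : C) + (c0 * d1 + c1 * d0) • v := by
      rw [add_mul, mul_add, mul_add, smul_mul_smul_comm, smul_mul_smul_comm,
        smul_mul_smul_comm, smul_mul_smul_comm, one_mul, mul_one, one_mul, hv2]
      rw [smul_smul]
      module
    rw [hexp]
    have hL : R (b ⊗ₜ[K] ((c0 * d0 + q * (c1 * d1)) • (1 : C) + (c0 * d1 + c1 * d0) • v))
        = (c0 * d0 + q * (c1 * d1)) • ((1 : C) ⊗ₜ[K] b)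
          + (c0 * d1 + c1 * d0) • (v ⊗ₜ[K] σ b) := by
      rw [TensorProduct.tmul_add, TensorProduct.tmul_smul, TensorProduct.tmul_smul,
        map_add, map_smul, map_smul, hR1, hRv]
    have hRba : R (b ⊗ₜ[K] (c0 • (1 : C) + c1 • v))
        = c0 • ((1 : C) ⊗ₜ[K] b) + c1 • (v ⊗ₜ[K] σ b) := by
      rw [TensorProduct.tmul_add, TensorProduct.tmul_smul, TensorProduct.tmul_smul,
        map_add, map_smul, map_smul, hR1, hRv]
    rw [hL, hRba, map_add, map_smul, map_smul]
    have key : ∀ y : B, attpRmul K C B R (d0 • (1 : C) + d1 • v) ((1 : C) ⊗ₜ[K] y)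
        = d0 • ((1 : C) ⊗ₜ[K] y) + d1 • (v ⊗ₜ[K] σ y) := by
      intro y
      simp only [attpRmul, LinearMap.coe_comp, Function.comp_apply,
        lTensor_tmul, LinearMap.flip_apply, TensorProduct.mk_apply,
        TensorProduct.tmul_add, TensorProduct.tmul_smul, map_add, map_smul,
        hR1, hRv, LinearEquiv.coe_coe, TensorProduct.assoc_symm_tmul,
        LinearMap.add_apply, LinearMap.smul_apply,
        rTensor_tmul, LinearMap.mul'_apply, one_mul]
    have keyv : ∀ y : B, attpRmul K C B R (d0 • (1 : C) + d1 • v) (v ⊗ₜ[K] y)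
        = d0 • (v ⊗ₜ[K] y) + (d1 * q) • ((1 : C) ⊗ₜ[K] σ y) := by
      intro y
      simp only [attpRmul, LinearMap.coe_comp, Function.comp_apply,
        lTensor_tmul, LinearMap.flip_apply, TensorProduct.mk_apply,
        TensorProduct.tmul_add, TensorProduct.tmul_smul, map_add, map_smul,
        hR1, hRv, LinearEquiv.coe_coe, TensorProduct.assoc_symm_tmul,
        LinearMap.add_apply, LinearMap.smul_apply,
        rTensor_tmul, LinearMap.mul'_apply, mul_one, hv2]
      rw [← TensorProduct.smul_tmul', smul_smul]
    rw [key b, keyv (σ b), hσinv]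
    module
  · intro a ha b b'
    obtain ⟨c, rfl⟩ := Submodule.mem_span_singleton.mp ha
    rw [TensorProduct.tmul_smul, TensorProduct.tmul_smul, map_smul, map_smul,
      map_smul, hRv, hRv, hσmul]
    congr 1
    simp only [attpLmul, LinearMap.coe_comp, Function.comp_apply,
      rTensor_tmul, TensorProduct.mk_apply, hRv, LinearEquiv.coe_coe,
      TensorProduct.assoc_tmul, lTensor_tmul, TensorProduct.comm_tmul,
      LinearMap.mul'_apply]
end

section
/- Let B be a unital K-algebra with an involution σ, q∈K nonzero, and let R : B⊗C(K,q) → C(K,q)⊗B be the alternative twisting map defined by R(b⊗1) = 1⊗b and R(b⊗v) = v⊗σ(b). Then the linear map a+vb ↦ 1⊗a + v⊗b is an isomorphism of unital algebras from the Cayley–Dickson algebra B̄(q) onto the alternative twisted tensor product C(K,q)⊗̄_R B. -/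
open TensorProduct LinearMap

/-- The multiplication of the Cayley–Dickson algebra `B̄(q)`, on `B ⊕ B` with
`a + vb ↔ (a, b)`: `(a+vb)(c+vd) = (ac + q d σ(b)) + v(σ(a)d + cb)`. -/
def cdMul (K B : Type*) [Field K] [NonAssocRing B] [Module K B]
    (σ : B →ₗ[K] B) (q : K) : B × B → B × B → B × B :=
  fun x y => (x.1 * y.1 + q • (y.2 * σ x.2), σ x.1 * y.2 + y.1 * x.2)

/-- The linear map `B̄(q) → C(K,q) ⊗ B`, `a + vb ↦ 1 ⊗ a + v ⊗ b`. -/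
noncomputable def cdToTensor (K B : Type*) [Field K] [NonAssocRing B] [Module K B]
    (q : K) :
    B × B →ₗ[K] (AdjoinRoot (Polynomial.X ^ 2 - Polynomial.C q)) ⊗[K] B :=
  ((TensorProduct.mk K (AdjoinRoot (Polynomial.X ^ 2 - Polynomial.C q)) B) 1) ∘ₗ
      (LinearMap.fst K B B) +
  ((TensorProduct.mk K (AdjoinRoot (Polynomial.X ^ 2 - Polynomial.C q)) B)
      (AdjoinRoot.root (Polynomial.X ^ 2 - Polynomial.C q))) ∘ₗ (LinearMap.snd K B B)


/-- Generic form of the map `a + vb ↦ 1 ⊗ a + v ⊗ b`. -/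
noncomputable def cdToTensorAux (K B C : Type*) [Field K] [NonAssocRing B] [Module K B]
    [CommRing C] [Algebra K C] (v : C) : B × B →ₗ[K] C ⊗[K] B :=
  ((TensorProduct.mk K C B) 1) ∘ₗ (LinearMap.fst K B B) +
  ((TensorProduct.mk K C B) v) ∘ₗ (LinearMap.snd K B B)

theorem stmt3aux (K B C : Type*) [Field K]
    [NonAssocRing B] [Module K B] [SMulCommClass K B B] [IsScalarTower K B B]
    [CommRing C] [Algebra K C]
    (σ : B →ₗ[K] B) (q : K) (v : C) (hvv : v * v = q • (1 : C))
    (b2 : Module.Basis (Fin 2) K C) (hb20 : b2 0 = 1) (hb21 : b2 1 = v)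
    (R : B ⊗[K] C →ₗ[K] C ⊗[K] B)
    (hR1 : ∀ b : B, R (b ⊗ₜ[K] (1 : C)) = 1 ⊗ₜ[K] b)
    (hRv : ∀ b : B, R (b ⊗ₜ[K] v) = v ⊗ₜ[K] σ b)
    (m : C ⊗[K] B →ₗ[K] C ⊗[K] B →ₗ[K] C ⊗[K] B)
    (hm1 : ∀ (b : B) (a' : C) (b' : B),
      m ((1 : C) ⊗ₜ[K] b) (a' ⊗ₜ[K] b') = (lTensor C (mulRight K b')) (R (b ⊗ₜ[K] a')))
    (hm2 : ∀ (b : B) (a' : C) (b' : B),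
      m (v ⊗ₜ[K] b) (a' ⊗ₜ[K] b') =
        (TensorProduct.map (mulLeft K v) (mulLeft K b')) (R (b ⊗ₜ[K] a'))) :
    Function.Bijective (cdToTensorAux K B C v) ∧
    cdToTensorAux K B C v ((1 : B), (0 : B)) = (1 : C) ⊗ₜ[K] (1 : B) ∧
    (∀ x y : B × B,
      cdToTensorAux K B C v (cdMul K B σ q x y) =
        m (cdToTensorAux K B C v x) (cdToTensorAux K B C v y)) := by
  have hct : ∀ a b : B, cdToTensorAux K B C v (a, b) = (1 : C) ⊗ₜ[K] a + v ⊗ₜ[K] b := by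
    intro a b
    simp [cdToTensorAux, TensorProduct.mk_apply]
  let φ : Fin 2 → (C ⊗[K] B →ₗ[K] B) := fun i =>
    (TensorProduct.lid K B).toLinearMap ∘ₗ rTensor B (b2.coord i)
  have hφ : ∀ (i : Fin 2) (c : C) (b : B), φ i (c ⊗ₜ[K] b) = b2.repr c i • b := by
    intro i c b
    simp [φ, Module.Basis.coord_apply]
  let g : C ⊗[K] B →ₗ[K] B × B := (φ 0).prod (φ 1)
  have hgf : Function.LeftInverse g (cdToTensorAux K B C v) := by
    intro x
    obtain ⟨a, b⟩ := x
    rw [hct]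
    simp only [g, map_add, LinearMap.prod_apply, Function.prod, hφ]
    rw [← hb20, ← hb21]
    simp [Finsupp.single_apply]
  have hfg : Function.RightInverse g (cdToTensorAux K B C v) := by
    intro x
    induction x using TensorProduct.induction_on with
    | zero => simp
    | tmul c b =>
      simp only [g, LinearMap.prod_apply, Function.prod, hφ]
      rw [hct]
      have hsum := b2.sum_repr c
      rw [Fin.sum_univ_two, hb20, hb21] at hsum
      rw [tmul_smul, tmul_smul, smul_tmul', smul_tmul', ← add_tmul, hsum]
    | add x y hx hy => simp only [map_add, hx, hy]
  refine ⟨⟨hgf.injective, hfg.surjective⟩, ?_, ?_⟩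
  · rw [hct]; simp
  · rintro ⟨a, b⟩ ⟨c, d⟩
    have h11 : m ((1:C) ⊗ₜ[K] a) ((1:C) ⊗ₜ[K] c) = (1:C) ⊗ₜ[K] (a * c) := by
      rw [hm1 a 1 c, hR1, lTensor_tmul, mulRight_apply]
    have h12 : m ((1:C) ⊗ₜ[K] a) (v ⊗ₜ[K] d) = v ⊗ₜ[K] (σ a * d) := by
      rw [hm1 a v d, hRv, lTensor_tmul, mulRight_apply]
    have h21 : m (v ⊗ₜ[K] b) ((1:C) ⊗ₜ[K] c) = v ⊗ₜ[K] (c * b) := by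
      rw [hm2 b 1 c, hR1, map_tmul, mulLeft_apply, mulLeft_apply, mul_one]
    have h22 : m (v ⊗ₜ[K] b) (v ⊗ₜ[K] d) = (1:C) ⊗ₜ[K] (q • (d * σ b)) := by
      rw [hm2 b v d, hRv, map_tmul, mulLeft_apply, mulLeft_apply, hvv, smul_tmul]
    rw [hct, hct, hct]
    simp only [cdMul, map_add, LinearMap.add_apply, h11, h12, h21, h22, tmul_add]
    abel

/-- `a+vb ↦ 1⊗a + v⊗b` is an isomorphism of unital algebras from the
Cayley–Dickson algebra `B̄(q)` onto `C(K,q) ⊗̄_R B`. -/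
theorem stmt3 (K B : Type*) [Field K]
    [NonAssocRing B] [Module K B] [SMulCommClass K B B] [IsScalarTower K B B]
    (σ : B →ₗ[K] B) (hσmul : ∀ x y : B, σ (x * y) = σ y * σ x)
    (hσone : σ 1 = 1) (hσinv : ∀ x : B, σ (σ x) = x)
    (q : K) (hq : q ≠ 0)
    (R : B ⊗[K] (AdjoinRoot (Polynomial.X ^ 2 - Polynomial.C q)) →ₗ[K]
         (AdjoinRoot (Polynomial.X ^ 2 - Polynomial.C q)) ⊗[K] B)
    (hR1 : ∀ b : B,
      R (b ⊗ₜ[K] (1 : AdjoinRoot (Polynomial.X ^ 2 - Polynomial.C q))) = 1 ⊗ₜ[K] b)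
    (hRv : ∀ b : B,
      R (b ⊗ₜ[K] AdjoinRoot.root (Polynomial.X ^ 2 - Polynomial.C q)) =
        (AdjoinRoot.root (Polynomial.X ^ 2 - Polynomial.C q)) ⊗ₜ[K] σ b)
    (hR : IsAltTwistingMap K (AdjoinRoot (Polynomial.X ^ 2 - Polynomial.C q)) B
      (Submodule.span K {AdjoinRoot.root (Polynomial.X ^ 2 - Polynomial.C q : Polynomial K)}) R)
    (m : (AdjoinRoot (Polynomial.X ^ 2 - Polynomial.C q)) ⊗[K] B →ₗ[K]
         (AdjoinRoot (Polynomial.X ^ 2 - Polynomial.C q)) ⊗[K] B →ₗ[K]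
         (AdjoinRoot (Polynomial.X ^ 2 - Polynomial.C q)) ⊗[K] B)
    (hm : IsAltMul K (AdjoinRoot (Polynomial.X ^ 2 - Polynomial.C q)) B
      (Submodule.span K {AdjoinRoot.root (Polynomial.X ^ 2 - Polynomial.C q : Polynomial K)}) R m) :
    Function.Bijective (cdToTensor K B q) ∧
    cdToTensor K B q ((1 : B), (0 : B)) =
      (1 : AdjoinRoot (Polynomial.X ^ 2 - Polynomial.C q)) ⊗ₜ[K] (1 : B) ∧
    (∀ x y : B × B,
      cdToTensor K B q (cdMul K B σ q x y) = m (cdToTensor K B q x) (cdToTensor K B q y)) := by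
  have hvv : AdjoinRoot.root (Polynomial.X ^ 2 - Polynomial.C q) *
      AdjoinRoot.root (Polynomial.X ^ 2 - Polynomial.C q) =
      q • (1 : AdjoinRoot (Polynomial.X ^ 2 - Polynomial.C q)) := by
    have h2 : AdjoinRoot.mk (Polynomial.X ^ 2 - Polynomial.C q) (Polynomial.X ^ 2) =
        AdjoinRoot.mk (Polynomial.X ^ 2 - Polynomial.C q) (Polynomial.C q) := by
      rw [← sub_eq_zero, ← map_sub, AdjoinRoot.mk_self]
    rw [AdjoinRoot.root, ← sq, ← map_pow, h2, AdjoinRoot.mk_C,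
      ← AdjoinRoot.algebraMap_eq, Algebra.algebraMap_eq_smul_one]
  have hmonic : (Polynomial.X ^ 2 - Polynomial.C q).Monic :=
    Polynomial.monic_X_pow_sub_C q two_ne_zero
  have hdeg : (Polynomial.X ^ 2 - Polynomial.C q).natDegree = 2 := by
    simp [Polynomial.natDegree_X_pow_sub_C]
  let pb := AdjoinRoot.powerBasis' hmonic
  let b2 : Module.Basis (Fin 2) K (AdjoinRoot (Polynomial.X ^ 2 - Polynomial.C q)) :=
    pb.basis.reindex (finCongr hdeg)
  have hb2 : ∀ i : Fin 2, b2 i = AdjoinRoot.root (Polynomial.X ^ 2 - Polynomial.C q) ^ (i : ℕ) := by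
    intro i
    rw [show b2 i = pb.basis ((finCongr hdeg).symm i) from Module.Basis.reindex_apply .. ,
      PowerBasis.coe_basis]
    rfl
  have hb20 : b2 0 = 1 := by simpa using hb2 0
  have hb21 : b2 1 = AdjoinRoot.root (Polynomial.X ^ 2 - Polynomial.C q) := by simpa using hb2 1
  exact stmt3aux K B (AdjoinRoot (Polynomial.X ^ 2 - Polynomial.C q)) σ q
    (AdjoinRoot.root (Polynomial.X ^ 2 - Polynomial.C q)) hvv b2 hb20 hb21 R hR1 hRv m
    hm.1 (hm.2 _ (Submodule.mem_span_singleton_self _))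
end

section
/- Let A be a unital K-algebra with an involutive algebra automorphism σ (σ² = id_A), q∈K nonzero, and fix any vector-space decomposition A = K·1_A ⊕ A₀. Then the linear map R : C(K,q)⊗A → A⊗C(K,q) defined by R(1⊗a) = a⊗1 and R(v⊗a) = σ(a)⊗v is an alternative twisting map, and the linear map a+bv ↦ a⊗1 + b⊗v is an isomorphism of unital algebras from the Clifford-process algebra Cl(A) onto the alternative twisted tensor product A⊗̄_R C(K,q). -/
open TensorProduct LinearMap

/-- The multiplication of the Clifford-process algebra `Cl(A)`, on `A ⊕ A` with
`a + bv ↔ (a, b)`: `(a+bv)(c+dv) = (ac + q bσ(d)) + (ad + bσ(c))v`. -/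
def clMul (K A : Type*) [Field K] [NonAssocRing A] [Module K A]
    (σ : A →ₗ[K] A) (q : K) : A × A → A × A → A × A :=
  fun x y => (x.1 * y.1 + q • (x.2 * σ y.2), x.1 * y.2 + x.2 * σ y.1)

/-- The linear map `Cl(A) → A ⊗ C(K,q)`, `a + bv ↦ a ⊗ 1 + b ⊗ v`. -/
noncomputable def clToTensor (K A : Type*) [Field K] [NonAssocRing A] [Module K A]
    (q : K) :
    A × A →ₗ[K] A ⊗[K] (AdjoinRoot (Polynomial.X ^ 2 - Polynomial.C q)) :=
  ((TensorProduct.mk K A (AdjoinRoot (Polynomial.X ^ 2 - Polynomial.C q))).flip 1) ∘ₗ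
      (LinearMap.fst K A A) +
  ((TensorProduct.mk K A (AdjoinRoot (Polynomial.X ^ 2 - Polynomial.C q))).flip
      (AdjoinRoot.root (Polynomial.X ^ 2 - Polynomial.C q))) ∘ₗ (LinearMap.snd K A A)

set_option maxHeartbeats 1000000 in
/-- for an algebra `A` with involutive automorphism `σ`, any decomposition
`A = K·1 ⊕ A₀` and `q ≠ 0`, the map `R : C(K,q) ⊗ A → A ⊗ C(K,q)` with
`R(1⊗a) = a⊗1`, `R(v⊗a) = σ(a)⊗v` is an alternative twisting map, and
`a + bv ↦ a⊗1 + b⊗v` is an isomorphism of unital algebras `Cl(A) ≅ A ⊗̄_R C(K,q)`. -/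
theorem stmt4 (K A : Type*) [Field K]
    [NonAssocRing A] [Module K A] [SMulCommClass K A A] [IsScalarTower K A A]
    (σ : A →ₗ[K] A) (hσmul : ∀ x y : A, σ (x * y) = σ x * σ y)
    (hσone : σ 1 = 1) (hσinv : ∀ x : A, σ (σ x) = x)
    (q : K) (hq : q ≠ 0)
    (A₀ : Submodule K A) (hdec : IsCompl (Submodule.span K {(1 : A)}) A₀)
    (R : (AdjoinRoot (Polynomial.X ^ 2 - Polynomial.C q)) ⊗[K] A →ₗ[K]
         A ⊗[K] (AdjoinRoot (Polynomial.X ^ 2 - Polynomial.C q)))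
    (hR1 : ∀ a : A,
      R ((1 : AdjoinRoot (Polynomial.X ^ 2 - Polynomial.C q)) ⊗ₜ[K] a) = a ⊗ₜ[K] 1)
    (hRv : ∀ a : A,
      R ((AdjoinRoot.root (Polynomial.X ^ 2 - Polynomial.C q)) ⊗ₜ[K] a) =
        σ a ⊗ₜ[K] AdjoinRoot.root (Polynomial.X ^ 2 - Polynomial.C q))
    (m : A ⊗[K] (AdjoinRoot (Polynomial.X ^ 2 - Polynomial.C q)) →ₗ[K]
         A ⊗[K] (AdjoinRoot (Polynomial.X ^ 2 - Polynomial.C q)) →ₗ[K]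
         A ⊗[K] (AdjoinRoot (Polynomial.X ^ 2 - Polynomial.C q)))
    (hm : IsAltMul K A (AdjoinRoot (Polynomial.X ^ 2 - Polynomial.C q)) A₀ R m) :
    IsAltTwistingMap K A (AdjoinRoot (Polynomial.X ^ 2 - Polynomial.C q)) A₀ R ∧
    Function.Bijective (clToTensor K A q) ∧
    clToTensor K A q ((1 : A), (0 : A)) =
      (1 : A) ⊗ₜ[K] (1 : AdjoinRoot (Polynomial.X ^ 2 - Polynomial.C q)) ∧
    (∀ x y : A × A,
      clToTensor K A q (clMul K A σ q x y) = m (clToTensor K A q x) (clToTensor K A q y)) := by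
  classical
  have hmonic : (Polynomial.X ^ 2 - Polynomial.C q).Monic :=
    Polynomial.monic_X_pow_sub_C q (by norm_num)
  have hdegp : (Polynomial.X ^ 2 - Polynomial.C q).degree = 2 :=
    Polynomial.degree_X_pow_sub_C (by norm_num) q
  have hofsmul : ∀ k : K, (AdjoinRoot.of (Polynomial.X ^ 2 - Polynomial.C q)) k
      = k • (1 : (AdjoinRoot (Polynomial.X ^ 2 - Polynomial.C q))) := by
    intro k
    rw [← AdjoinRoot.algebraMap_eq, Algebra.algebraMap_eq_smul_one]
  have hvv : (AdjoinRoot.root (Polynomial.X ^ 2 - Polynomial.C q)) * (AdjoinRoot.root (Polynomial.X ^ 2 - Polynomial.C q)) = q • (1 : (AdjoinRoot (Polynomial.X ^ 2 - Polynomial.C q))) := by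
    have h0 : AdjoinRoot.mk (Polynomial.X ^ 2 - Polynomial.C q)
        (Polynomial.X ^ 2 - Polynomial.C q) = 0 := AdjoinRoot.mk_self
    rw [map_sub, map_pow, AdjoinRoot.mk_X, AdjoinRoot.mk_C, sub_eq_zero] at h0
    rw [show (AdjoinRoot.root (Polynomial.X ^ 2 - Polynomial.C q)) * (AdjoinRoot.root (Polynomial.X ^ 2 - Polynomial.C q)) = (AdjoinRoot.root (Polynomial.X ^ 2 - Polynomial.C q)) ^ 2 from (sq (AdjoinRoot.root (Polynomial.X ^ 2 - Polynomial.C q))).symm, h0, hofsmul]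
  -- smul extraction lemmas
  have hsA : ∀ (k : K) (x : A) (y : (AdjoinRoot (Polynomial.X ^ 2 - Polynomial.C q))),
      (k • x) ⊗ₜ[K] y = k • (x ⊗ₜ[K] y) := fun k x y => (TensorProduct.smul_tmul' k x y).symm
  have hsB : ∀ (k : K) (x : (AdjoinRoot (Polynomial.X ^ 2 - Polynomial.C q))) (y : A),
      (k • x) ⊗ₜ[K] y = k • (x ⊗ₜ[K] y) := fun k x y => (TensorProduct.smul_tmul' k x y).symm
  have hsAB : ∀ (k : K) (x : A ⊗[K] (AdjoinRoot (Polynomial.X ^ 2 - Polynomial.C q))) (y : (AdjoinRoot (Polynomial.X ^ 2 - Polynomial.C q))),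
      (k • x) ⊗ₜ[K] y = k • (x ⊗ₜ[K] y) := fun k x y => (TensorProduct.smul_tmul' k x y).symm
  -- every element of B is k • 1 + k' • v
  have hdecB : ∀ b : (AdjoinRoot (Polynomial.X ^ 2 - Polynomial.C q)), ∃ k k' : K, b = k • 1 + k' • (AdjoinRoot.root (Polynomial.X ^ 2 - Polynomial.C q)) := by
    intro b
    induction b using AdjoinRoot.induction_on with
    | ih g =>
      refine ⟨(g %ₘ (Polynomial.X ^ 2 - Polynomial.C q)).coeff 0,
        (g %ₘ (Polynomial.X ^ 2 - Polynomial.C q)).coeff 1, ?_⟩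
      have h1 : AdjoinRoot.mk (Polynomial.X ^ 2 - Polynomial.C q) g
          = AdjoinRoot.mk (Polynomial.X ^ 2 - Polynomial.C q)
            (g %ₘ (Polynomial.X ^ 2 - Polynomial.C q)) := by
        conv_lhs => rw [← Polynomial.modByMonic_add_div g (Polynomial.X ^ 2 - Polynomial.C q)]
        rw [map_add, map_mul, AdjoinRoot.mk_self, zero_mul, add_zero]
      have hdeg : (g %ₘ (Polynomial.X ^ 2 - Polynomial.C q)).degree ≤ 1 := by
        have h2 := Polynomial.degree_modByMonic_lt g hmonic
        rw [hdegp] at h2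
        exact Order.le_of_lt_succ (by exact_mod_cast h2)
      have h2 := Polynomial.eq_X_add_C_of_degree_le_one hdeg
      rw [h1]
      conv_lhs => rw [h2]
      rw [map_add, map_mul, AdjoinRoot.mk_C, AdjoinRoot.mk_C, AdjoinRoot.mk_X,
        hofsmul, hofsmul, smul_mul_assoc, one_mul, add_comm]
  -- clToTensor on pairs
  have hphi : ∀ a b : A, clToTensor K A q (a, b)
      = a ⊗ₜ[K] (1 : (AdjoinRoot (Polynomial.X ^ 2 - Polynomial.C q))) + b ⊗ₜ[K] (AdjoinRoot.root (Polynomial.X ^ 2 - Polynomial.C q)) := by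
    intro a b
    rfl
  -- left inverse
  have hleftinv : ∃ ginv : A ⊗[K] (AdjoinRoot (Polynomial.X ^ 2 - Polynomial.C q)) →ₗ[K] A × A,
      ∀ x : A × A, ginv (clToTensor K A q x) = x := by
    have hM1 : AdjoinRoot.modByMonicHom hmonic 1 = 1 := by
      rw [show (1 : (AdjoinRoot (Polynomial.X ^ 2 - Polynomial.C q))) = AdjoinRoot.mk (Polynomial.X ^ 2 - Polynomial.C q) 1
          from (map_one _).symm, AdjoinRoot.modByMonicHom_mk]
      rw [Polynomial.modByMonic_eq_self_iff hmonic, hdegp, Polynomial.degree_one]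
      norm_num
    have hMv : AdjoinRoot.modByMonicHom hmonic (AdjoinRoot.root (Polynomial.X ^ 2 - Polynomial.C q)) = Polynomial.X := by
      rw [show (AdjoinRoot.root (Polynomial.X ^ 2 - Polynomial.C q)) = AdjoinRoot.mk (Polynomial.X ^ 2 - Polynomial.C q) Polynomial.X
          from (AdjoinRoot.mk_X).symm, AdjoinRoot.modByMonicHom_mk]
      rw [Polynomial.modByMonic_eq_self_iff hmonic, hdegp, Polynomial.degree_X]
      norm_num
    refine ⟨(TensorProduct.lift (((LinearMap.lsmul K A) ∘ₗ
        (Polynomial.lcoeff K 0 ∘ₗ AdjoinRoot.modByMonicHom hmonic)).flip)).prod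
      (TensorProduct.lift (((LinearMap.lsmul K A) ∘ₗ
        (Polynomial.lcoeff K 1 ∘ₗ AdjoinRoot.modByMonicHom hmonic)).flip)), ?_⟩
    rintro ⟨a, b⟩
    rw [hphi]
    simp [hM1, hMv, Polynomial.coeff_one]
  obtain ⟨ginv, hleft⟩ := hleftinv
  constructor
  · refine ⟨hR1, ?_, ?_, ?_⟩
    · -- R (b ⊗ₜ 1) = 1 ⊗ₜ b
      intro b
      obtain ⟨k, k', rfl⟩ := hdecB b
      simp only [TensorProduct.add_tmul, TensorProduct.tmul_add, hsA, hsB,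
        TensorProduct.tmul_smul, map_add, map_smul, hR1, hRv, hσone]
    · -- R (b ⊗ₜ (a * a')) = attpRmul ...
      intro a a' b
      obtain ⟨k, k', rfl⟩ := hdecB b
      simp only [TensorProduct.add_tmul, TensorProduct.tmul_add, hsA, hsB, hsAB,
        TensorProduct.tmul_smul, map_add, map_smul, hR1, hRv, hσmul, attpRmul,
        LinearMap.coe_comp, Function.comp_apply, LinearEquiv.coe_coe, lTensor_tmul,
        TensorProduct.mk_apply, LinearMap.flip_apply, TensorProduct.assoc_symm_tmul,
        rTensor_tmul, LinearMap.mul'_apply]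
    · -- R ((b * b') ⊗ₜ a) = attpLmul ...
      intro a _ b b'
      obtain ⟨k, k', rfl⟩ := hdecB b
      obtain ⟨l, l', rfl⟩ := hdecB b'
      have hexp : (k • (1 : (AdjoinRoot (Polynomial.X ^ 2 - Polynomial.C q))) + k' • (AdjoinRoot.root (Polynomial.X ^ 2 - Polynomial.C q))) * (l • 1 + l' • (AdjoinRoot.root (Polynomial.X ^ 2 - Polynomial.C q)))
          = (k * l + k' * l' * q) • (1 : (AdjoinRoot (Polynomial.X ^ 2 - Polynomial.C q))) + (k * l' + k' * l) • (AdjoinRoot.root (Polynomial.X ^ 2 - Polynomial.C q)) := by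
        simp only [mul_add, add_mul, smul_mul_smul_comm, one_mul, mul_one, hvv, smul_smul]
        module
      rw [hexp]
      simp only [TensorProduct.add_tmul, TensorProduct.tmul_add, hsA, hsB, hsAB,
        TensorProduct.tmul_smul, map_add, map_smul, hR1, hRv, hσinv, attpLmul,
        LinearMap.coe_comp, Function.comp_apply, LinearEquiv.coe_coe, rTensor_tmul,
        TensorProduct.mk_apply, TensorProduct.assoc_tmul, lTensor_tmul,
        LinearMap.add_apply, LinearMap.smul_apply,
        TensorProduct.comm_tmul, LinearMap.mul'_apply, one_mul, mul_one, hvv, hσone]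
      module
  refine ⟨⟨?_, ?_⟩, ?_, ?_⟩
  · -- injective
    intro x y hxy
    rw [← hleft x, ← hleft y, hxy]
  · -- surjective
    intro z
    induction z using TensorProduct.induction_on with
    | zero => exact ⟨(0, 0), by rw [hphi]; simp⟩
    | tmul a b =>
      obtain ⟨k, k', rfl⟩ := hdecB b
      exact ⟨(k • a, k' • a), by
        rw [hphi]
        simp only [TensorProduct.tmul_add, TensorProduct.tmul_smul, hsA]⟩
    | add x y hx hy =>
      obtain ⟨w1, hw1⟩ := hx
      obtain ⟨w2, hw2⟩ := hy
      exact ⟨w1 + w2, by rw [map_add, hw1, hw2]⟩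
  · -- unit
    rw [hphi]
    simp
  · -- multiplicativity
    have hdecA : ∀ a : A, ∃ k : K, ∃ a₀ ∈ A₀, a = k • 1 + a₀ := by
      intro a
      have ha : a ∈ (Submodule.span K {(1 : A)}) ⊔ A₀ := by
        rw [hdec.sup_eq_top]; trivial
      obtain ⟨y, hy, z, hz, rfl⟩ := Submodule.mem_sup.mp ha
      obtain ⟨k, rfl⟩ := Submodule.mem_span_singleton.mp hy
      exact ⟨k, z, hz, rfl⟩
    have hm1 : ∀ (a c : A) (b' : (AdjoinRoot (Polynomial.X ^ 2 - Polynomial.C q))),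
        m (a ⊗ₜ[K] 1) (c ⊗ₜ[K] b') = (a * c) ⊗ₜ[K] b' := by
      intro a c b'
      obtain ⟨k, a₀, h₀, rfl⟩ := hdecA a
      simp only [TensorProduct.add_tmul, hsA, map_add, map_smul, LinearMap.add_apply,
        LinearMap.smul_apply, hm.1, hm.2 a₀ h₀, hR1, lTensor_tmul, TensorProduct.map_tmul,
        mulRight_apply, mulLeft_apply, one_mul, mul_one, add_mul, smul_mul_assoc]
    have hmv : ∀ (a c : A) (b' : (AdjoinRoot (Polynomial.X ^ 2 - Polynomial.C q))),
        m (a ⊗ₜ[K] (AdjoinRoot.root (Polynomial.X ^ 2 - Polynomial.C q))) (c ⊗ₜ[K] b') = (a * σ c) ⊗ₜ[K] ((AdjoinRoot.root (Polynomial.X ^ 2 - Polynomial.C q)) * b') := by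
      intro a c b'
      obtain ⟨k, a₀, h₀, rfl⟩ := hdecA a
      simp only [TensorProduct.add_tmul, hsA, map_add, map_smul, LinearMap.add_apply,
        LinearMap.smul_apply, hm.1, hm.2 a₀ h₀, hRv, lTensor_tmul, TensorProduct.map_tmul,
        mulRight_apply, mulLeft_apply, one_mul, mul_one, add_mul, smul_mul_assoc,
        mul_comm b' (AdjoinRoot.root (Polynomial.X ^ 2 - Polynomial.C q))]
    rintro ⟨a, b⟩ ⟨c, d⟩
    rw [show clMul K A σ q (a, b) (c, d)
        = (a * c + q • (b * σ d), a * d + b * σ c) from rfl]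
    rw [hphi, hphi, hphi]
    simp only [map_add, LinearMap.add_apply, hm1, hmv, hvv, mul_one,
      TensorProduct.add_tmul, TensorProduct.tmul_smul, hsA]
    module
end

section
/- Let A be an associative unital K-algebra with an involutive algebra automorphism σ (σ² = id_A) and q∈K nonzero. Then the Clifford-process algebra Cl(A) is associative. -/
/-- if `A` is an associative unital `K`-algebra with an involutive algebra
automorphism `σ` and `q ≠ 0`, then the Clifford-process algebra `Cl(A)` is associative. -/
theorem stmt5 (K A : Type*) [Field K] [Ring A] [Algebra K A]
    (σ : A →ₗ[K] A) (hσmul : ∀ x y : A, σ (x * y) = σ x * σ y)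
    (hσone : σ 1 = 1) (hσinv : ∀ x : A, σ (σ x) = x)
    (q : K) (hq : q ≠ 0) :
    ∀ x y z : A × A,
      clMul K A σ q (clMul K A σ q x y) z = clMul K A σ q x (clMul K A σ q y z) := by
  intro x y z
  simp only [clMul, Prod.mk.injEq, map_add, map_smul, hσmul, hσinv, mul_add, add_mul,
    smul_mul_assoc, mul_smul_comm, smul_add, mul_assoc]
  constructor <;> abel
end

section
/- Let A⊗̄_R B be an alternative twisted tensor product of algebras such that R is bijective with inverse P : A⊗B → B⊗A. Assume that (id_A⊗τ_{B,B})∘(R⊗id_B)∘(id_B⊗R) = (R⊗id_B)∘(id_B⊗R)∘(τ_{B,B}⊗id_A) as maps B⊗B⊗A → A⊗B⊗B, and that R(B⊗A₀) = A₀⊗B. Then P satisfies the mirror conditions (aatm1)–(aatm3) with C = B and D = A, and R : B⊗̲_P A → A⊗̄_R B is an isomorphism of unital algebras. -/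
open TensorProduct LinearMap

set_option synthInstance.maxHeartbeats 400000

section MirrorPreamble

variable (K : Type*) [Field K]
variable (C : Type*) [NonAssocRing C] [Module K C] [SMulCommClass K C C] [IsScalarTower K C C]
variable (D : Type*) [NonAssocRing D] [Module K D] [SMulCommClass K D D] [IsScalarTower K D D]

/-- Sweedler helper: sends `Σ cP ⊗ dP` in `C ⊗ D` to `Σ (c'_p * cP) ⊗ (dP)_p`,
where `P((dP) ⊗ c') = c'_p ⊗ (dP)_p`. -/
noncomputable def mirrorPc (P : D ⊗[K] C →ₗ[K] C ⊗[K] D) (c' : C) :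
    C ⊗[K] D →ₗ[K] C ⊗[K] D :=
  (LinearMap.rTensor D ((LinearMap.mul' K C) ∘ₗ (TensorProduct.comm K C C).toLinearMap)) ∘ₗ
    (TensorProduct.assoc K C C D).symm.toLinearMap ∘ₗ
    (LinearMap.lTensor C (P ∘ₗ (TensorProduct.mk K D C).flip c'))

/-- Sweedler helper: sends `Σ cP ⊗ d'P` in `C ⊗ D` to `Σ (cP)_p ⊗ (d_p * d'P)`,
where `P(d ⊗ cP) = (cP)_p ⊗ d_p`. -/
noncomputable def mirrorPd (P : D ⊗[K] C →ₗ[K] C ⊗[K] D) (d : D) :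
    C ⊗[K] D →ₗ[K] C ⊗[K] D :=
  (LinearMap.lTensor C (LinearMap.mul' K D)) ∘ₗ
    (TensorProduct.assoc K C D D).toLinearMap ∘ₗ
    (LinearMap.rTensor D (P ∘ₗ (TensorProduct.mk K D C) d))

/-- `P : D ⊗ C → C ⊗ D` satisfies the mirror conditions (aatm1)–(aatm3) w.r.t. the
decomposition `D = K·1_D ⊕ D₀`. -/
def IsMirrorTwistingMap (D₀ : Submodule K D) (P : D ⊗[K] C →ₗ[K] C ⊗[K] D) : Prop :=
  (∀ c : C, P ((1 : D) ⊗ₜ[K] c) = c ⊗ₜ[K] (1 : D)) ∧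
  (∀ d : D, P (d ⊗ₜ[K] (1 : C)) = (1 : C) ⊗ₜ[K] d) ∧
  (∀ d ∈ D₀, ∀ c c' : C, P (d ⊗ₜ[K] (c * c')) = mirrorPc K C D P c' (P (d ⊗ₜ[K] c))) ∧
  (∀ (c : C) (d d' : D), P ((d * d') ⊗ₜ[K] c) = mirrorPd K C D P d (P (d' ⊗ₜ[K] c)))

/-- `m` is the multiplication of the mirror product `C ⊗̲_P D`:
`(c⊗d)(c'⊗1) = c c'_P ⊗ d_P` and, for `d' ∈ D₀`, `(c⊗d)(c'⊗d') = c'_P c ⊗ d_P d'`. -/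
def IsMirrorMul (D₀ : Submodule K D) (P : D ⊗[K] C →ₗ[K] C ⊗[K] D)
    (m : C ⊗[K] D →ₗ[K] C ⊗[K] D →ₗ[K] C ⊗[K] D) : Prop :=
  (∀ (c : C) (d : D) (c' : C),
      m (c ⊗ₜ[K] d) (c' ⊗ₜ[K] (1 : D)) =
        (LinearMap.rTensor D (LinearMap.mulLeft K c)) (P (d ⊗ₜ[K] c'))) ∧
  (∀ d' ∈ D₀, ∀ (c : C) (d : D) (c' : C),
      m (c ⊗ₜ[K] d) (c' ⊗ₜ[K] d') =
        (TensorProduct.map (LinearMap.mulRight K c) (LinearMap.mulRight K d'))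
          (P (d ⊗ₜ[K] c')))

end MirrorPreamble

section BraidPreamble

variable (K : Type*) [Field K]
variable (A : Type*) [NonAssocRing A] [Module K A] [SMulCommClass K A A] [IsScalarTower K A A]
variable (B : Type*) [NonAssocRing B] [Module K B] [SMulCommClass K B B] [IsScalarTower K B B]

/-- The left-hand side `(id_A ⊗ τ_{B,B}) ∘ (R ⊗ id_B) ∘ (id_B ⊗ R)` of the braid
relation, as a map `B ⊗ (B ⊗ A) → A ⊗ (B ⊗ B)`. -/
noncomputable def braidL (R : B ⊗[K] A →ₗ[K] A ⊗[K] B) :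
    B ⊗[K] (B ⊗[K] A) →ₗ[K] A ⊗[K] (B ⊗[K] B) :=
  (lTensor A (TensorProduct.comm K B B).toLinearMap) ∘ₗ
    (TensorProduct.assoc K A B B).toLinearMap ∘ₗ (rTensor B R) ∘ₗ
    (TensorProduct.assoc K B A B).symm.toLinearMap ∘ₗ (lTensor B R)

/-- The right-hand side `(R ⊗ id_B) ∘ (id_B ⊗ R) ∘ (τ_{B,B} ⊗ id_A)` of the braid
relation, as a map `B ⊗ (B ⊗ A) → A ⊗ (B ⊗ B)`. -/
noncomputable def braidR (R : B ⊗[K] A →ₗ[K] A ⊗[K] B) :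
    B ⊗[K] (B ⊗[K] A) →ₗ[K] A ⊗[K] (B ⊗[K] B) :=
  (TensorProduct.assoc K A B B).toLinearMap ∘ₗ (rTensor B R) ∘ₗ
    (TensorProduct.assoc K B A B).symm.toLinearMap ∘ₗ (lTensor B R) ∘ₗ
    (TensorProduct.assoc K B B A).toLinearMap ∘ₗ
    (rTensor A (TensorProduct.comm K B B).toLinearMap) ∘ₗ
    (TensorProduct.assoc K B B A).symm.toLinearMap

end BraidPreamble


section Stmt6Aux

variable {K : Type*} [Field K]
variable {A : Type*} [NonAssocRing A] [Module K A] [SMulCommClass K A A] [IsScalarTower K A A]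
variable {B : Type*} [NonAssocRing B] [Module K B] [SMulCommClass K B B] [IsScalarTower K B B]

/-- Helper map: `x ⊗ y ↦ Σ x_R ⊗ (b_R * y)` where `R(b ⊗ x) = Σ x_R ⊗ b_R`. -/
noncomputable def stmt6M1 (R : B ⊗[K] A →ₗ[K] A ⊗[K] B) (b : B) :
    A ⊗[K] B →ₗ[K] A ⊗[K] B :=
  (lTensor A (LinearMap.mul' K B)) ∘ₗ (TensorProduct.assoc K A B B).toLinearMap ∘ₗ
    (rTensor B (R ∘ₗ (TensorProduct.mk K B A) b))

lemma stmt6M1_tmul (R : B ⊗[K] A →ₗ[K] A ⊗[K] B) (b : B) (x : A) (y : B) :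
    stmt6M1 R b (x ⊗ₜ[K] y) = lTensor A (mulRight K y) (R (b ⊗ₜ[K] x)) := by
  simp only [stmt6M1, coe_comp, Function.comp_apply, rTensor_tmul, mk_apply,
    LinearEquiv.coe_coe]
  generalize R (b ⊗ₜ[K] x) = v
  induction v using TensorProduct.induction_on with
  | zero => simp
  | tmul p q => simp
  | add u v hu hv => rw [add_tmul, map_add, map_add, map_add, hu, hv]

lemma stmt6_attpLmul_tmul (R : B ⊗[K] A →ₗ[K] A ⊗[K] B) (b : B) (x : A) (y : B) :
    attpLmul K A B R b (x ⊗ₜ[K] y) = lTensor A (mulLeft K y) (R (b ⊗ₜ[K] x)) := by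
  simp only [attpLmul, coe_comp, Function.comp_apply, rTensor_tmul, mk_apply,
    LinearEquiv.coe_coe]
  generalize R (b ⊗ₜ[K] x) = v
  induction v using TensorProduct.induction_on with
  | zero => simp
  | tmul p q => simp
  | add u v hu hv => rw [add_tmul, map_add, map_add, map_add, hu, hv]

lemma stmt6_attpRmul_tmul (R : B ⊗[K] A →ₗ[K] A ⊗[K] B) (a' : A) (x : A) (y : B) :
    attpRmul K A B R a' (x ⊗ₜ[K] y) = rTensor B (mulLeft K x) (R (y ⊗ₜ[K] a')) := by
  simp only [attpRmul, coe_comp, Function.comp_apply, lTensor_tmul, mk_apply,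
    flip_apply, LinearEquiv.coe_coe]
  generalize R (y ⊗ₜ[K] a') = v
  induction v using TensorProduct.induction_on with
  | zero => simp
  | tmul p q => simp
  | add u v hu hv => rw [tmul_add, map_add, map_add, map_add, hu, hv]

lemma stmt6_mirrorPc_tmul (P : A ⊗[K] B →ₗ[K] B ⊗[K] A) (b' b0 : B) (a0 : A) :
    mirrorPc K B A P b' (b0 ⊗ₜ[K] a0) = rTensor A (mulRight K b0) (P (a0 ⊗ₜ[K] b')) := by
  simp only [mirrorPc, coe_comp, Function.comp_apply, lTensor_tmul, mk_apply,
    flip_apply, LinearEquiv.coe_coe]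
  generalize P (a0 ⊗ₜ[K] b') = v
  induction v using TensorProduct.induction_on with
  | zero => simp
  | tmul p q => simp
  | add u v hu hv => rw [tmul_add, map_add, map_add, map_add, hu, hv]

lemma stmt6_mirrorPd_tmul (P : A ⊗[K] B →ₗ[K] B ⊗[K] A) (a : A) (b0 : B) (a0 : A) :
    mirrorPd K B A P a (b0 ⊗ₜ[K] a0) = lTensor B (mulRight K a0) (P (a ⊗ₜ[K] b0)) := by
  simp only [mirrorPd, coe_comp, Function.comp_apply, rTensor_tmul, mk_apply,
    LinearEquiv.coe_coe]
  generalize P (a ⊗ₜ[K] b0) = v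
  induction v using TensorProduct.induction_on with
  | zero => simp
  | tmul p q => simp
  | add u v hu hv => rw [add_tmul, map_add, map_add, map_add, hu, hv]

lemma stmt6_braidKeyL (R : B ⊗[K] A →ₗ[K] A ⊗[K] B) (b0 b : B) (a : A) :
    lTensor A (LinearMap.mul' K B) (braidL K A B R (b0 ⊗ₜ[K] (b ⊗ₜ[K] a))) =
      attpLmul K A B R b0 (R (b ⊗ₜ[K] a)) := by
  simp only [braidL, coe_comp, Function.comp_apply, lTensor_tmul, LinearEquiv.coe_coe]
  generalize R (b ⊗ₜ[K] a) = v
  induction v using TensorProduct.induction_on with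
  | zero => simp
  | tmul x y =>
      rw [stmt6_attpLmul_tmul]
      simp only [TensorProduct.assoc_symm_tmul, rTensor_tmul]
      generalize R (b0 ⊗ₜ[K] x) = w
      induction w using TensorProduct.induction_on with
      | zero => simp
      | tmul p q => simp
      | add u v hu hv =>
          simp only [add_tmul, map_add, hu, hv]
  | add u v hu hv =>
      simp only [tmul_add, map_add] at hu hv ⊢
      rw [hu, hv]

lemma stmt6_braidKeyR (R : B ⊗[K] A →ₗ[K] A ⊗[K] B) (b0 b : B) (a : A) :
    lTensor A (LinearMap.mul' K B) (braidR K A B R (b0 ⊗ₜ[K] (b ⊗ₜ[K] a))) =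
      stmt6M1 R b (R (b0 ⊗ₜ[K] a)) := by
  simp only [braidR, coe_comp, Function.comp_apply, LinearEquiv.coe_coe,
    TensorProduct.assoc_symm_tmul, rTensor_tmul, TensorProduct.comm_tmul,
    TensorProduct.assoc_tmul, lTensor_tmul]
  generalize R (b0 ⊗ₜ[K] a) = v
  induction v using TensorProduct.induction_on with
  | zero => simp
  | tmul x y =>
      rw [stmt6M1_tmul]
      simp only [TensorProduct.assoc_symm_tmul, rTensor_tmul]
      generalize R (b ⊗ₜ[K] x) = w
      induction w using TensorProduct.induction_on with
      | zero => simp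
      | tmul p q => simp
      | add u v hu hv =>
          simp only [add_tmul, map_add, hu, hv]
  | add u v hu hv =>
      simp only [tmul_add, map_add] at hu hv ⊢
      rw [hu, hv]

lemma stmt6_braidKey (R : B ⊗[K] A →ₗ[K] A ⊗[K] B)
    (hbraid : braidL K A B R = braidR K A B R) (b0 b : B) (a : A) :
    attpLmul K A B R b0 (R (b ⊗ₜ[K] a)) = stmt6M1 R b (R (b0 ⊗ₜ[K] a)) := by
  rw [← stmt6_braidKeyL R b0 b a, ← stmt6_braidKeyR R b0 b a, hbraid]

lemma stmt6_L1 (R : B ⊗[K] A →ₗ[K] A ⊗[K] B)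
    (hRatm2 : ∀ (a a' : A) (b : B),
      R (b ⊗ₜ[K] (a * a')) = attpRmul K A B R a' (R (b ⊗ₜ[K] a)))
    (a' : A) (x : B ⊗[K] A) :
    R (lTensor B (mulRight K a') x) = attpRmul K A B R a' (R x) := by
  induction x using TensorProduct.induction_on with
  | zero => simp
  | tmul b a => simpa using hRatm2 a a' b
  | add u v hu hv => simp only [map_add, hu, hv]

lemma stmt6_L2 {A₀ : Submodule K A} (R : B ⊗[K] A →ₗ[K] A ⊗[K] B)
    (hRatm3 : ∀ a ∈ A₀, ∀ b b' : B,
      R ((b * b') ⊗ₜ[K] a) = attpLmul K A B R b (R (b' ⊗ₜ[K] a)))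
    (b : B) (w : B ⊗[K] A₀) :
    R (rTensor A (mulLeft K b) (lTensor B A₀.subtype w)) =
      attpLmul K A B R b (R (lTensor B A₀.subtype w)) := by
  induction w using TensorProduct.induction_on with
  | zero => simp
  | tmul b' a => simpa using hRatm3 a a.2 b b'
  | add u v hu hv => simp only [map_add, hu, hv]

lemma stmt6_K1 {A₀ : Submodule K A} (R : B ⊗[K] A →ₗ[K] A ⊗[K] B)
    (hbraid : braidL K A B R = braidR K A B R)
    (hRatm3 : ∀ a ∈ A₀, ∀ b b' : B,
      R ((b * b') ⊗ₜ[K] a) = attpLmul K A B R b (R (b' ⊗ₜ[K] a)))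
    (b : B) (w : B ⊗[K] A₀) :
    R (rTensor A (mulRight K b) (lTensor B A₀.subtype w)) =
      stmt6M1 R b (R (lTensor B A₀.subtype w)) := by
  induction w using TensorProduct.induction_on with
  | zero => simp
  | tmul b0 a =>
      simp only [lTensor_tmul, Submodule.subtype_apply, rTensor_tmul, mulRight_apply]
      rw [hRatm3 a a.2 b0 b, stmt6_braidKey R hbraid b0 b a]
  | add u v hu hv => simp only [map_add, hu, hv]

end Stmt6Aux

/-- if the alternative twisting map `R` is bijective with inverse `P`,
satisfies the braid relation and `R(B ⊗ A₀) = A₀ ⊗ B`, then `P` satisfies the mirror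
conditions (aatm1)–(aatm3) (with `C = B`, `D = A`) and `R` is an isomorphism of unital
algebras `B ⊗̲_P A ≅ A ⊗̄_R B`. -/
theorem stmt6 (K A B : Type*) [Field K]
    [NonAssocRing A] [Module K A] [SMulCommClass K A A] [IsScalarTower K A A]
    [NonAssocRing B] [Module K B] [SMulCommClass K B B] [IsScalarTower K B B]
    (A₀ : Submodule K A) (hdec : IsCompl (Submodule.span K {(1 : A)}) A₀)
    (R : B ⊗[K] A →ₗ[K] A ⊗[K] B) (hR : IsAltTwistingMap K A B A₀ R)
    (m : A ⊗[K] B →ₗ[K] A ⊗[K] B →ₗ[K] A ⊗[K] B) (hm : IsAltMul K A B A₀ R m)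
    (P : A ⊗[K] B →ₗ[K] B ⊗[K] A)
    (hPR : ∀ x : B ⊗[K] A, P (R x) = x) (hRP : ∀ y : A ⊗[K] B, R (P y) = y)
    (hbraid : braidL K A B R = braidR K A B R)
    (hR0 : Submodule.map R (LinearMap.range (lTensor B A₀.subtype)) =
      LinearMap.range (rTensor B A₀.subtype))
    (m' : B ⊗[K] A →ₗ[K] B ⊗[K] A →ₗ[K] B ⊗[K] A)
    (hm' : IsMirrorMul K B A A₀ P m') :
    IsMirrorTwistingMap K B A A₀ P ∧
    Function.Bijective R ∧
    R ((1 : B) ⊗ₜ[K] (1 : A)) = (1 : A) ⊗ₜ[K] (1 : B) ∧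
    (∀ x y : B ⊗[K] A, R (m' x y) = m (R x) (R y)) := by
  obtain ⟨hR1, hR2, hRatm2, hRatm3⟩ := hR
  obtain ⟨hm1, hm2⟩ := hm
  obtain ⟨hm'1, hm'2⟩ := hm'
  have injR : Function.Injective R := fun x y h => by rw [← hPR x, h, hPR]
  -- memberships coming from hR0
  have memN : ∀ a ∈ A₀, ∀ b : B, ∃ w : B ⊗[K] A₀,
      lTensor B A₀.subtype w = P (a ⊗ₜ[K] b) := by
    intro a ha b
    have h1 : a ⊗ₜ[K] b ∈ LinearMap.range (rTensor B A₀.subtype) :=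
      ⟨(⟨a, ha⟩ : A₀) ⊗ₜ[K] b, by simp⟩
    rw [← hR0] at h1
    obtain ⟨T, hT, hRT⟩ := h1
    obtain ⟨w, hw⟩ := hT
    exact ⟨w, by rw [hw, ← hRT, hPR]⟩
  have memM : ∀ a ∈ A₀, ∀ b : B, ∃ w : A₀ ⊗[K] B,
      rTensor B A₀.subtype w = R (b ⊗ₜ[K] a) := by
    intro a ha b
    have h1 : R (b ⊗ₜ[K] a) ∈ Submodule.map R (LinearMap.range (lTensor B A₀.subtype)) :=
      ⟨b ⊗ₜ[K] a, ⟨b ⊗ₜ[K] (⟨a, ha⟩ : A₀), by simp⟩, rfl⟩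
    rw [hR0] at h1
    exact h1
  -- the four mirror conditions for P
  have paatm1 : ∀ c : B, P ((1 : A) ⊗ₜ[K] c) = c ⊗ₜ[K] (1 : A) := by
    intro c; rw [← hR2 c, hPR]
  have paatm2 : ∀ d : A, P (d ⊗ₜ[K] (1 : B)) = (1 : B) ⊗ₜ[K] d := by
    intro d; rw [← hR1 d, hPR]
  have D1 : ∀ (a : A) (z : B ⊗[K] A),
      R (mirrorPd K B A P a z) = rTensor B (mulLeft K a) (R z) := by
    intro a z
    induction z using TensorProduct.induction_on with
    | zero => simp
    | tmul b0 a0 =>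
        rw [stmt6_mirrorPd_tmul, stmt6_L1 R hRatm2 a0 (P (a ⊗ₜ[K] b0)), hRP,
          stmt6_attpRmul_tmul]
    | add u v hu hv => simp only [map_add, hu, hv]
  have C2 : ∀ (b' : B) (w : B ⊗[K] A₀),
      R (mirrorPc K B A P b' (lTensor B A₀.subtype w)) =
        lTensor A (mulRight K b') (R (lTensor B A₀.subtype w)) := by
    intro b' w
    induction w using TensorProduct.induction_on with
    | zero => simp
    | tmul b0 a =>
        obtain ⟨w', hw'⟩ := memN a a.2 b'
        simp only [lTensor_tmul, Submodule.subtype_apply]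
        rw [stmt6_mirrorPc_tmul, ← hw', stmt6_K1 R hbraid hRatm3 b0 w', hw', hRP,
          stmt6M1_tmul]
    | add u v hu hv => simp only [map_add, hu, hv]
  have paatm3 : ∀ d ∈ A₀, ∀ c c' : B,
      P (d ⊗ₜ[K] (c * c')) = mirrorPc K B A P c' (P (d ⊗ₜ[K] c)) := by
    intro d hd c c'
    apply injR
    obtain ⟨w, hw⟩ := memN d hd c
    rw [hRP, ← hw, C2 c' w, hw, hRP]
    simp
  have paatm4 : ∀ (c : B) (d d' : A),
      P ((d * d') ⊗ₜ[K] c) = mirrorPd K B A P d (P (d' ⊗ₜ[K] c)) := by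
    intro c d d'
    apply injR
    rw [hRP, D1 d (P (d' ⊗ₜ[K] c)), hRP]
    simp
  -- multiplicativity helpers
  have Mlem1 : ∀ (b : B) (y' : A ⊗[K] B), m ((1 : A) ⊗ₜ[K] b) y' = stmt6M1 R b y' := by
    intro b y'
    induction y' using TensorProduct.induction_on with
    | zero => simp
    | tmul a' b' => rw [hm1 b a' b', stmt6M1_tmul]
    | add u v hu hv => simp only [map_add, hu, hv]
  have E6 : ∀ a ∈ A₀, ∀ (b0 : B) (z : A ⊗[K] B),
      m (a ⊗ₜ[K] b0) z = rTensor B (mulLeft K a) (attpLmul K A B R b0 z) := by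
    intro a ha b0 z
    induction z using TensorProduct.induction_on with
    | zero => simp
    | tmul x y =>
        rw [hm2 a ha b0 x y, stmt6_attpLmul_tmul, ← LinearMap.rTensor_comp_lTensor,
          coe_comp, Function.comp_apply]
    | add u v hu hv => simp only [map_add, hu, hv]
  have Mright1 : ∀ (w : A₀ ⊗[K] B) (b' : B),
      m (rTensor B A₀.subtype w) ((1 : A) ⊗ₜ[K] b') =
        lTensor A (mulLeft K b') (rTensor B A₀.subtype w) := by
    intro w b'
    induction w using TensorProduct.induction_on with
    | zero => simp
    | tmul a b0 =>
        simp only [rTensor_tmul, Submodule.subtype_apply]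
        rw [hm2 (a : A) a.2 b0 1 b', hR2 b0]
        simp
    | add u v hu hv => simp only [map_add, LinearMap.add_apply, hu, hv]
  have CL : ∀ a' ∈ A₀, ∀ (b' : B) (w : A₀ ⊗[K] B),
      attpRmul K A B R a' (lTensor A (mulRight K b') (rTensor B A₀.subtype w)) =
        m (rTensor B A₀.subtype w) (R (b' ⊗ₜ[K] a')) := by
    intro a' ha' b' w
    induction w using TensorProduct.induction_on with
    | zero => simp
    | tmul a b0 =>
        simp only [rTensor_tmul, Submodule.subtype_apply, lTensor_tmul, mulRight_apply]
        rw [stmt6_attpRmul_tmul, hRatm3 a' ha' b0 b', E6 (a : A) a.2 b0]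
    | add u v hu hv => simp only [map_add, LinearMap.add_apply, hu, hv]
  -- the four pure-tensor cases
  have Q11 : ∀ b b' : B, R (m' (b ⊗ₜ[K] (1 : A)) (b' ⊗ₜ[K] (1 : A))) =
      m (R (b ⊗ₜ[K] (1 : A))) (R (b' ⊗ₜ[K] (1 : A))) := by
    intro b b'
    rw [hm'1 b 1 b', paatm1 b', hR2 b, hR2 b', Mlem1 b, stmt6M1_tmul, hR2 b]
    simp [hR2]
  have Q10 : ∀ a ∈ A₀, ∀ b b' : B, R (m' (b ⊗ₜ[K] a) (b' ⊗ₜ[K] (1 : A))) =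
      m (R (b ⊗ₜ[K] a)) (R (b' ⊗ₜ[K] (1 : A))) := by
    intro a ha b b'
    obtain ⟨w, hw⟩ := memN a ha b'
    obtain ⟨w2, hw2⟩ := memM a ha b
    rw [hm'1 b a b', ← hw, stmt6_L2 R hRatm3 b w, hw, hRP, stmt6_attpLmul_tmul,
      hR2 b', ← hw2, Mright1 w2 b', hw2]
  have Q01 : ∀ a' ∈ A₀, ∀ b b' : B, R (m' (b ⊗ₜ[K] (1 : A)) (b' ⊗ₜ[K] a')) =
      m (R (b ⊗ₜ[K] (1 : A))) (R (b' ⊗ₜ[K] a')) := by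
    intro a' ha' b b'
    rw [hm'2 a' ha' b 1 b', paatm1 b', hR2 b, Mlem1 b,
      show (TensorProduct.map (mulRight K b) (mulRight K a')) (b' ⊗ₜ[K] (1 : A)) =
        (b' * b) ⊗ₜ[K] a' from by simp,
      hRatm3 a' ha' b' b, stmt6_braidKey R hbraid b' b a']
  have Q00 : ∀ a ∈ A₀, ∀ a' ∈ A₀, ∀ b b' : B,
      R (m' (b ⊗ₜ[K] a) (b' ⊗ₜ[K] a')) = m (R (b ⊗ₜ[K] a)) (R (b' ⊗ₜ[K] a')) := by
    intro a ha a' ha' b b'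
    obtain ⟨w, hw⟩ := memN a ha b'
    obtain ⟨w2, hw2⟩ := memM a ha b
    rw [hm'2 a' ha' b a b', ← LinearMap.lTensor_comp_rTensor, coe_comp,
      Function.comp_apply, stmt6_L1 R hRatm2 a', ← hw, stmt6_K1 R hbraid hRatm3 b w,
      hw, hRP, stmt6M1_tmul, ← hw2, CL a' ha' b' w2, hw2]
  -- assembling by linearity using the decomposition A = K·1 ⊕ A₀
  have decomp : ∀ a : A, ∃ (s : K) (v : A), v ∈ A₀ ∧ a = s • (1 : A) + v := by
    intro a
    have h : a ∈ Submodule.span K {(1 : A)} ⊔ A₀ := by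
      rw [hdec.sup_eq_top]; exact Submodule.mem_top
    obtain ⟨u, hu, v, hv, huv⟩ := Submodule.mem_sup.mp h
    obtain ⟨s, hs⟩ := Submodule.mem_span_singleton.mp hu
    exact ⟨s, v, hv, by rw [← huv, hs]⟩
  have Qy1 : ∀ (b : B) (a : A) (b' : B),
      R (m' (b ⊗ₜ[K] a) (b' ⊗ₜ[K] (1 : A))) =
        m (R (b ⊗ₜ[K] a)) (R (b' ⊗ₜ[K] (1 : A))) := by
    intro b a b'
    obtain ⟨s, v, hv, rfl⟩ := decomp a
    rw [show b ⊗ₜ[K] (s • (1 : A) + v) = s • (b ⊗ₜ[K] (1 : A)) + b ⊗ₜ[K] v from by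
      rw [tmul_add, tmul_smul]]
    simp only [map_add, map_smul, LinearMap.add_apply, LinearMap.smul_apply]
    rw [Q11 b b', Q10 v hv b b']
  have Qy0 : ∀ a' ∈ A₀, ∀ (b : B) (a : A) (b' : B),
      R (m' (b ⊗ₜ[K] a) (b' ⊗ₜ[K] a')) = m (R (b ⊗ₜ[K] a)) (R (b' ⊗ₜ[K] a')) := by
    intro a' ha' b a b'
    obtain ⟨s, v, hv, rfl⟩ := decomp a
    rw [show b ⊗ₜ[K] (s • (1 : A) + v) = s • (b ⊗ₜ[K] (1 : A)) + b ⊗ₜ[K] v from by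
      rw [tmul_add, tmul_smul]]
    simp only [map_add, map_smul, LinearMap.add_apply, LinearMap.smul_apply]
    rw [Q01 a' ha' b b', Q00 v hv a' ha' b b']
  have key : ∀ (b : B) (a : A) (b' : B) (a' : A),
      R (m' (b ⊗ₜ[K] a) (b' ⊗ₜ[K] a')) = m (R (b ⊗ₜ[K] a)) (R (b' ⊗ₜ[K] a')) := by
    intro b a b' a'
    obtain ⟨t, w, hw, rfl⟩ := decomp a'
    rw [show b' ⊗ₜ[K] (t • (1 : A) + w) = t • (b' ⊗ₜ[K] (1 : A)) + b' ⊗ₜ[K] w from by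
      rw [tmul_add, tmul_smul]]
    simp only [map_add, map_smul, LinearMap.add_apply, LinearMap.smul_apply]
    rw [Qy1 b a b', Qy0 w hw b a b']
  refine ⟨⟨paatm1, paatm2, paatm3, paatm4⟩,
    ⟨injR, fun y => ⟨P y, hRP y⟩⟩, hR1 1, ?_⟩
  intro x y
  induction x using TensorProduct.induction_on with
  | zero => simp
  | tmul b a =>
      induction y using TensorProduct.induction_on with
      | zero => simp
      | tmul b' a' => exact key b a b' a'
      | add u v hu hv => simp only [map_add, hu, hv]
  | add u v hu hv => simp only [map_add, LinearMap.add_apply, hu, hv]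
end

section
/- Let A⊗̄_R B and E⊗̄_T F be two alternative twisted tensor products of algebras, and let f : A → E and g : B → F be unital algebra maps such that f(A₀) ⊆ E₀ and (f⊗g)∘R = T∘(g⊗f). Then f⊗g : A⊗̄_R B → E⊗̄_T F is a unital algebra map. -/
open TensorProduct LinearMap

/-- given alternative twisted tensor products `A ⊗̄_R B` and `E ⊗̄_T F`
and unital algebra maps `f : A → E`, `g : B → F` with `f(A₀) ⊆ E₀` and
`(f⊗g) ∘ R = T ∘ (g⊗f)`, the map `f⊗g : A ⊗̄_R B → E ⊗̄_T F` is a unital algebra map. -/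
theorem stmt11 (K A B E F : Type*) [Field K]
    [NonAssocRing A] [Module K A] [SMulCommClass K A A] [IsScalarTower K A A]
    [NonAssocRing B] [Module K B] [SMulCommClass K B B] [IsScalarTower K B B]
    [NonAssocRing E] [Module K E] [SMulCommClass K E E] [IsScalarTower K E E]
    [NonAssocRing F] [Module K F] [SMulCommClass K F F] [IsScalarTower K F F]
    (A₀ : Submodule K A) (hdecA : IsCompl (Submodule.span K {(1 : A)}) A₀)
    (E₀ : Submodule K E) (hdecE : IsCompl (Submodule.span K {(1 : E)}) E₀)
    (R : B ⊗[K] A →ₗ[K] A ⊗[K] B) (hR : IsAltTwistingMap K A B A₀ R)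
    (mR : A ⊗[K] B →ₗ[K] A ⊗[K] B →ₗ[K] A ⊗[K] B) (hmR : IsAltMul K A B A₀ R mR)
    (T : F ⊗[K] E →ₗ[K] E ⊗[K] F) (hT : IsAltTwistingMap K E F E₀ T)
    (mT : E ⊗[K] F →ₗ[K] E ⊗[K] F →ₗ[K] E ⊗[K] F) (hmT : IsAltMul K E F E₀ T mT)
    (f : A →ₗ[K] E) (hfmul : ∀ x y : A, f (x * y) = f x * f y) (hfone : f 1 = 1)
    (g : B →ₗ[K] F) (hgmul : ∀ x y : B, g (x * y) = g x * g y) (hgone : g 1 = 1)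
    (hf0 : ∀ a ∈ A₀, f a ∈ E₀)
    (hcomp : (TensorProduct.map f g) ∘ₗ R = T ∘ₗ (TensorProduct.map g f)) :
    (TensorProduct.map f g) ((1 : A) ⊗ₜ[K] (1 : B)) = (1 : E) ⊗ₜ[K] (1 : F) ∧
    (∀ x y : A ⊗[K] B,
      (TensorProduct.map f g) (mR x y) =
        mT ((TensorProduct.map f g) x) ((TensorProduct.map f g) y)) := by
  obtain ⟨hmR1, hmR2⟩ := hmR
  obtain ⟨hmT1, hmT2⟩ := hmT
  have hRT : ∀ (b : B) (a : A),
      (TensorProduct.map f g) (R (b ⊗ₜ[K] a)) = T ((g b) ⊗ₜ[K] (f a)) := by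
    intro b a
    simpa using LinearMap.congr_fun hcomp (b ⊗ₜ[K] a)
  refine ⟨by simp [hfone, hgone], ?_⟩
  have key : ∀ (a : A) (b : B) (a' : A) (b' : B),
      (TensorProduct.map f g) (mR (a ⊗ₜ[K] b) (a' ⊗ₜ[K] b')) =
      mT ((f a) ⊗ₜ[K] (g b)) ((f a') ⊗ₜ[K] (g b')) := by
    intro a b a' b'
    have case1 : ∀ b : B, (TensorProduct.map f g) (mR ((1:A) ⊗ₜ[K] b) (a' ⊗ₜ[K] b')) =
        mT ((1:E) ⊗ₜ[K] (g b)) ((f a') ⊗ₜ[K] (g b')) := by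
      intro b
      rw [hmR1, hmT1, ← hRT]
      generalize R (b ⊗ₜ[K] a') = z
      induction z using TensorProduct.induction_on with
      | zero => simp
      | tmul x y => simp [hgmul]
      | add u v hu hv => simp [map_add, hu, hv]
    have case2 : ∀ a ∈ A₀, ∀ b : B,
        (TensorProduct.map f g) (mR (a ⊗ₜ[K] b) (a' ⊗ₜ[K] b')) =
        mT ((f a) ⊗ₜ[K] (g b)) ((f a') ⊗ₜ[K] (g b')) := by
      intro a ha b
      rw [hmR2 a ha, hmT2 (f a) (hf0 a ha), ← hRT]
      generalize R (b ⊗ₜ[K] a') = z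
      induction z using TensorProduct.induction_on with
      | zero => simp
      | tmul x y => simp [hfmul, hgmul]
      | add u v hu hv => simp [map_add, hu, hv]
    obtain ⟨y, z, hy, hz, hyz⟩ :=
      Submodule.codisjoint_iff_exists_add_eq.mp hdecA.codisjoint a
    obtain ⟨k, rfl⟩ := Submodule.mem_span_singleton.mp hy
    subst hyz
    have hfa : f (k • (1:A) + z) = k • (1:E) + f z := by
      simp [hfone]
    have expand : (k • (1:A) + z) ⊗ₜ[K] b
        = k • ((1:A) ⊗ₜ[K] b) + z ⊗ₜ[K] b := by
      rw [TensorProduct.add_tmul, TensorProduct.smul_tmul']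
    have expandE : (k • (1:E) + f z) ⊗ₜ[K] (g b)
        = k • ((1:E) ⊗ₜ[K] (g b)) + (f z) ⊗ₜ[K] (g b) := by
      rw [TensorProduct.add_tmul, TensorProduct.smul_tmul']
    rw [expand, hfa, expandE]
    simp only [map_add, map_smul, LinearMap.add_apply, LinearMap.smul_apply]
    rw [case1 b, case2 z hz b]
  intro x y
  induction x using TensorProduct.induction_on with
  | zero => simp
  | tmul a b =>
    induction y using TensorProduct.induction_on with
    | zero => simp
    | tmul a' b' => simpa using key a b a' b'
    | add u v hu hv => simp only [map_add, hu, hv]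
  | add u v hu hv => simp only [map_add, LinearMap.add_apply, hu, hv]
end

section
/- Let A = K·1_A ⊕ A₀ be a unital K-algebra with A₀·A₀ ⊆ K·1_A, B a unital K-algebra with a strong involution σ, and R : B⊗A → A⊗B the alternative twisting map given by R(b⊗1_A) = 1_A⊗b and R(b⊗a) = a⊗σ(b) for a∈A₀. Assume moreover that A and B are alternative algebras. Then in A⊗̄_R B, for all b,b'∈B and all a,a'∈A each of which lies either in K·1_A or in A₀, the left and right alternative laws hold for tensor monomials: [(a⊗b)(a⊗b)](a'⊗b') = (a⊗b)[(a⊗b)(a'⊗b')] and (a⊗b)[(a'⊗b')(a'⊗b')] = [(a⊗b)(a'⊗b')](a'⊗b'). -/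
open TensorProduct LinearMap

/-- if `A₀·A₀ ⊆ K·1_A`, `A` and `B` are alternative, `σ` is a strong
involution of `B` and `R` is the alternative twisting map `R(b⊗1) = 1⊗b`,
`R(b⊗a) = a⊗σ(b)` (`a ∈ A₀`), then in `A ⊗̄_R B` the left and right alternative laws
hold for tensor monomials `a⊗b`, `a'⊗b'` with `a, a'` homogeneous. -/
theorem stmt13 (K A B : Type*) [Field K]
    [NonAssocRing A] [Module K A] [SMulCommClass K A A] [IsScalarTower K A A]
    [NonAssocRing B] [Module K B] [SMulCommClass K B B] [IsScalarTower K B B]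
    (A₀ : Submodule K A) (hdec : IsCompl (Submodule.span K {(1 : A)}) A₀)
    (h00 : ∀ x ∈ A₀, ∀ y ∈ A₀, x * y ∈ Submodule.span K {(1 : A)})
    (hAaltl : ∀ x y : A, x * x * y = x * (x * y))
    (hAaltr : ∀ x y : A, x * (y * y) = x * y * y)
    (hBaltl : ∀ x y : B, x * x * y = x * (x * y))
    (hBaltr : ∀ x y : B, x * (y * y) = x * y * y)
    (σ : B →ₗ[K] B) (hσmul : ∀ x y : B, σ (x * y) = σ y * σ x)
    (hσone : σ 1 = 1) (hσinv : ∀ x : B, σ (σ x) = x)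
    (hσtr : ∀ b : B, b + σ b ∈ Submodule.span K {(1 : B)})
    (hσnr : ∀ b : B, b * σ b ∈ Submodule.span K {(1 : B)})
    (R : B ⊗[K] A →ₗ[K] A ⊗[K] B)
    (hR1 : ∀ b : B, R (b ⊗ₜ[K] (1 : A)) = (1 : A) ⊗ₜ[K] b)
    (hR0 : ∀ a ∈ A₀, ∀ b : B, R (b ⊗ₜ[K] a) = a ⊗ₜ[K] σ b)
    (m : A ⊗[K] B →ₗ[K] A ⊗[K] B →ₗ[K] A ⊗[K] B) (hm : IsAltMul K A B A₀ R m) :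
    ∀ a a' : A, (a ∈ A₀ ∨ a ∈ Submodule.span K {(1 : A)}) →
      (a' ∈ A₀ ∨ a' ∈ Submodule.span K {(1 : A)}) →
      ∀ b b' : B,
        m (m (a ⊗ₜ[K] b) (a ⊗ₜ[K] b)) (a' ⊗ₜ[K] b') =
          m (a ⊗ₜ[K] b) (m (a ⊗ₜ[K] b) (a' ⊗ₜ[K] b')) ∧
        m (a ⊗ₜ[K] b) (m (a' ⊗ₜ[K] b') (a' ⊗ₜ[K] b')) =
          m (m (a ⊗ₜ[K] b) (a' ⊗ₜ[K] b')) (a' ⊗ₜ[K] b')  := by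
  obtain ⟨hm1, hm0⟩ := hm
  -- explicit product formulas
  have e11 : ∀ b b' : B,
      m ((1:A) ⊗ₜ[K] b) ((1:A) ⊗ₜ[K] b') = (1:A) ⊗ₜ[K] (b * b') := by
    intro b b'
    rw [hm1, hR1]
    simp
  have e10 : ∀ a' ∈ A₀, ∀ b b' : B,
      m ((1:A) ⊗ₜ[K] b) (a' ⊗ₜ[K] b') = a' ⊗ₜ[K] (σ b * b') := by
    intro a' ha' b b'
    rw [hm1, hR0 a' ha']
    simp
  have e01 : ∀ a ∈ A₀, ∀ b b' : B,
      m (a ⊗ₜ[K] b) ((1:A) ⊗ₜ[K] b') = a ⊗ₜ[K] (b' * b) := by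
    intro a ha b b'
    rw [hm0 a ha, hR1]
    simp
  have e00 : ∀ a ∈ A₀, ∀ a' ∈ A₀, ∀ b b' : B,
      m (a ⊗ₜ[K] b) (a' ⊗ₜ[K] b') = (a * a') ⊗ₜ[K] (b' * σ b) := by
    intro a ha a' ha' b b'
    rw [hm0 a ha, hR0 a' ha']
    simp
  -- auxiliary facts in B
  have hσc : ∀ x : B, σ x * x = x * σ x := by
    intro x
    obtain ⟨t, ht⟩ := Submodule.mem_span_singleton.mp (hσtr x)
    have hx : σ x = t • (1:B) - x := eq_sub_of_add_eq' ht.symm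
    rw [hx]
    simp [sub_mul, mul_sub, smul_mul_assoc, mul_smul_comm]
  have BL1 : ∀ x y : B, x * (σ x * y) = (x * σ x) * y := by
    intro x y
    obtain ⟨t, ht⟩ := Submodule.mem_span_singleton.mp (hσtr x)
    have hx : σ x = t • (1:B) - x := eq_sub_of_add_eq' ht.symm
    rw [hx]
    simp only [sub_mul, mul_sub, smul_mul_assoc, mul_smul_comm, one_mul, mul_one]
    rw [hBaltl]
  have BL2 : ∀ x y : B, (x * y) * σ y = x * (y * σ y) := by
    intro x y
    obtain ⟨t, ht⟩ := Submodule.mem_span_singleton.mp (hσtr y)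
    have hy : σ y = t • (1:B) - y := eq_sub_of_add_eq' ht.symm
    rw [hy]
    simp only [sub_mul, mul_sub, smul_mul_assoc, mul_smul_comm, one_mul, mul_one]
    rw [hBaltr]
  have BL3 : ∀ x y : B, (x * σ y) * y = x * (σ y * y) := by
    intro x y
    have h := BL2 x (σ y)
    rwa [hσinv] at h
  -- core case (1,1)
  have C1 : ∀ b b' : B,
      m (m ((1:A) ⊗ₜ[K] b) ((1:A) ⊗ₜ[K] b)) ((1:A) ⊗ₜ[K] b') =
        m ((1:A) ⊗ₜ[K] b) (m ((1:A) ⊗ₜ[K] b) ((1:A) ⊗ₜ[K] b')) ∧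
      m ((1:A) ⊗ₜ[K] b) (m ((1:A) ⊗ₜ[K] b') ((1:A) ⊗ₜ[K] b')) =
        m (m ((1:A) ⊗ₜ[K] b) ((1:A) ⊗ₜ[K] b')) ((1:A) ⊗ₜ[K] b') := by
    intro b b'
    constructor
    · rw [e11, e11, e11, e11, hBaltl]
    · rw [e11, e11, e11, e11, hBaltr]
  -- core case (1, a'∈A₀)
  have C2 : ∀ a' ∈ A₀, ∀ b b' : B,
      m (m ((1:A) ⊗ₜ[K] b) ((1:A) ⊗ₜ[K] b)) (a' ⊗ₜ[K] b') =
        m ((1:A) ⊗ₜ[K] b) (m ((1:A) ⊗ₜ[K] b) (a' ⊗ₜ[K] b')) ∧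
      m ((1:A) ⊗ₜ[K] b) (m (a' ⊗ₜ[K] b') (a' ⊗ₜ[K] b')) =
        m (m ((1:A) ⊗ₜ[K] b) (a' ⊗ₜ[K] b')) (a' ⊗ₜ[K] b') := by
    intro a' ha' b b'
    obtain ⟨k', hk'⟩ := Submodule.mem_span_singleton.mp (h00 a' ha' a' ha')
    obtain ⟨n', hn'⟩ := Submodule.mem_span_singleton.mp (hσnr b')
    constructor
    · rw [e11, e10 a' ha', e10 a' ha', e10 a' ha', hσmul, hBaltl]
    · rw [e00 a' ha' a' ha', e10 a' ha', e00 a' ha' a' ha', ← hk', ← hn']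
      rw [hσmul, hσinv, BL1, ← hn']
      simp only [← smul_tmul', tmul_smul, map_smul, LinearMap.smul_apply,
        smul_mul_assoc, one_mul, mul_one]
      rw [e11, mul_one]
  -- core case (a∈A₀, 1)
  have C3 : ∀ a ∈ A₀, ∀ b b' : B,
      m (m (a ⊗ₜ[K] b) (a ⊗ₜ[K] b)) ((1:A) ⊗ₜ[K] b') =
        m (a ⊗ₜ[K] b) (m (a ⊗ₜ[K] b) ((1:A) ⊗ₜ[K] b')) ∧
      m (a ⊗ₜ[K] b) (m ((1:A) ⊗ₜ[K] b') ((1:A) ⊗ₜ[K] b')) =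
        m (m (a ⊗ₜ[K] b) ((1:A) ⊗ₜ[K] b')) ((1:A) ⊗ₜ[K] b') := by
    intro a ha b b'
    obtain ⟨k, hk⟩ := Submodule.mem_span_singleton.mp (h00 a ha a ha)
    obtain ⟨n, hn⟩ := Submodule.mem_span_singleton.mp (hσnr b)
    constructor
    · rw [e00 a ha a ha, e01 a ha, e00 a ha a ha, ← hk, ← hn, BL2, ← hn]
      simp only [← smul_tmul', tmul_smul, map_smul, LinearMap.smul_apply,
        smul_mul_assoc, mul_smul_comm, one_mul, mul_one]
      rw [e11, one_mul]
    · rw [e11, e01 a ha, e01 a ha, e01 a ha, hBaltl]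
  -- core case (a∈A₀, a'∈A₀)
  have C4 : ∀ a ∈ A₀, ∀ a' ∈ A₀, ∀ b b' : B,
      m (m (a ⊗ₜ[K] b) (a ⊗ₜ[K] b)) (a' ⊗ₜ[K] b') =
        m (a ⊗ₜ[K] b) (m (a ⊗ₜ[K] b) (a' ⊗ₜ[K] b')) ∧
      m (a ⊗ₜ[K] b) (m (a' ⊗ₜ[K] b') (a' ⊗ₜ[K] b')) =
        m (m (a ⊗ₜ[K] b) (a' ⊗ₜ[K] b')) (a' ⊗ₜ[K] b') := by
    intro a ha a' ha' b b'
    obtain ⟨k, hk⟩ := Submodule.mem_span_singleton.mp (h00 a ha a ha)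
    obtain ⟨k', hk'⟩ := Submodule.mem_span_singleton.mp (h00 a' ha' a' ha')
    obtain ⟨c, hc⟩ := Submodule.mem_span_singleton.mp (h00 a ha a' ha')
    obtain ⟨n, hn⟩ := Submodule.mem_span_singleton.mp (hσnr b)
    obtain ⟨n', hn'⟩ := Submodule.mem_span_singleton.mp (hσnr b')
    have hAl : k • a' = c • a := by
      have h := hAaltl a a'
      rw [← hk, ← hc] at h
      simpa [smul_mul_assoc, mul_smul_comm] using h
    have hAr : k' • a = c • a' := by
      have h := hAaltr a a'
      rw [← hk', ← hc] at h
      simpa [smul_mul_assoc, mul_smul_comm] using h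
    constructor
    · rw [e00 a ha a ha, e00 a ha a' ha', ← hk, ← hn, ← hc]
      simp only [← smul_tmul', tmul_smul, map_smul, LinearMap.smul_apply]
      rw [e10 a' ha', e01 a ha, hσone, one_mul, BL3, hσc, ← hn]
      simp only [tmul_smul, mul_smul_comm, mul_one]
      rw [smul_comm c n]
      congr 1
      rw [smul_tmul', smul_tmul', hAl]
    · rw [e00 a' ha' a' ha', e00 a ha a' ha', ← hk', ← hn', ← hc]
      simp only [← smul_tmul', tmul_smul, map_smul, LinearMap.smul_apply]
      rw [e01 a ha, e10 a' ha', one_mul, hσmul, hσinv, BL3, hσc, ← hn']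
      simp only [tmul_smul, mul_smul_comm, mul_one]
      rw [smul_comm c n']
      congr 1
      rw [smul_tmul', smul_tmul', hAr]
  -- wrap up
  intro a a' ha ha' b b'
  rcases ha with ha | ha
  · rcases ha' with ha' | ha'
    · exact C4 a ha a' ha' b b'
    · obtain ⟨k', hk'⟩ := Submodule.mem_span_singleton.mp ha'
      subst hk'
      constructor
      · have h := (C3 a ha b b').1
        simp only [← smul_tmul', tmul_smul, map_smul, LinearMap.smul_apply]
        rw [h]
      · have h := (C3 a ha b b').2
        simp only [← smul_tmul', tmul_smul, map_smul, LinearMap.smul_apply]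
        rw [h]
  · obtain ⟨k, hk⟩ := Submodule.mem_span_singleton.mp ha
    subst hk
    rcases ha' with ha' | ha'
    · constructor
      · have h := (C2 a' ha' b b').1
        simp only [← smul_tmul', tmul_smul, map_smul, LinearMap.smul_apply]
        rw [h]
      · have h := (C2 a' ha' b b').2
        simp only [← smul_tmul', tmul_smul, map_smul, LinearMap.smul_apply]
        rw [h]
    · obtain ⟨k', hk'⟩ := Submodule.mem_span_singleton.mp ha'
      subst hk'
      constructor
      · have h := (C1 b b').1
        simp only [← smul_tmul', tmul_smul, map_smul, LinearMap.smul_apply]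
        rw [h]
      · have h := (C1 b b').2
        simp only [← smul_tmul', tmul_smul, map_smul, LinearMap.smul_apply]
        rw [h]
end

section
/- Let B be a unital K-algebra with a strong involution σ (trace t, norm n) and q,r∈K nonzero. Then the map σ̄ : B̄(q,r) → B̄(q,r), σ̄(a+vb+zc) := σ(a) − vb − zc, is a strong involution of the algebra B̄(q,r); moreover the trace and norm of x = a+vb+zc ∈ B̄(q,r) are given by t(x) = t(a) and n(x) = n(a) − q n(b) − r n(c). -/
/-- The multiplication of the tripling `B̄(q,r)`, on `B ⊕ B ⊕ B` with
`a + vb + zc ↔ (a, b, c)`: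
`(a+vb+zc)(a'+vb'+zc') = (aa' + q b'σ(b) + r c'σ(c)) + v(σ(a)b' + a'b) + z(σ(a)c' + a'c)`. -/
def tMul (K B : Type*) [Field K] [NonAssocRing B] [Module K B]
    (σ : B →ₗ[K] B) (q r : K) : B × B × B → B × B × B → B × B × B :=
  fun x y =>
    (x.1 * y.1 + q • (y.2.1 * σ x.2.1) + r • (y.2.2 * σ x.2.2),
     σ x.1 * y.2.1 + y.1 * x.2.1,
     σ x.1 * y.2.2 + y.1 * x.2.2)

/-- The lifted involution `σ̄` on `B̄(q,r)`: `σ̄(a+vb+zc) = σ(a) − vb − zc`. -/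
def tInv (K B : Type*) [Field K] [NonAssocRing B] [Module K B]
    (σ : B →ₗ[K] B) : B × B × B → B × B × B :=
  fun x => (σ x.1, -x.2.1, -x.2.2)

/-- `σ̄(a+vb+zc) = σ(a) − vb − zc` is a strong involution of `B̄(q,r)`,
with trace `t(a+vb+zc) = t(a)` and norm `n(a+vb+zc) = n(a) − q n(b) − r n(c)`. -/
theorem stmt16 (K B : Type*) [Field K]
    [NonAssocRing B] [Module K B] [SMulCommClass K B B] [IsScalarTower K B B]
    (σ : B →ₗ[K] B) (hσmul : ∀ x y : B, σ (x * y) = σ y * σ x)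
    (hσone : σ 1 = 1) (hσinv : ∀ x : B, σ (σ x) = x)
    (t n : B → K)
    (ht : ∀ b : B, b + σ b = t b • (1 : B))
    (hn : ∀ b : B, b * σ b = n b • (1 : B))
    (hn' : ∀ b : B, σ b * b = n b • (1 : B))
    (q r : K) (hq : q ≠ 0) (hr : r ≠ 0) :
    (∀ x y : B × B × B,
        tInv K B σ (tMul K B σ q r x y) = tMul K B σ q r (tInv K B σ y) (tInv K B σ x)) ∧
    (∀ x : B × B × B, tInv K B σ (tInv K B σ x) = x) ∧
    tInv K B σ ((1 : B), (0 : B), (0 : B)) = ((1 : B), (0 : B), (0 : B)) ∧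
    (∀ x : B × B × B, x + tInv K B σ x = t x.1 • ((1 : B), (0 : B), (0 : B))) ∧
    (∀ x : B × B × B,
        tMul K B σ q r x (tInv K B σ x) =
          (n x.1 - q * n x.2.1 - r * n x.2.2) • ((1 : B), (0 : B), (0 : B))) := by
  refine ⟨?_, ?_, ?_, ?_, ?_⟩
  · intro x y
    simp only [tMul, tInv, Prod.mk.injEq]
    refine ⟨?_, by simp [hσinv, mul_neg], by simp [hσinv, mul_neg]⟩
    simp [hσmul, hσinv, map_add, map_smul, mul_neg, neg_mul, neg_neg]
  · intro x
    simp [tInv, hσinv]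
  · simp [tInv, hσone]
  · intro x
    have := ht x.1
    simp [tInv, Prod.ext_iff, Prod.smul_def, ← this]
  · intro x
    simp only [tMul, tInv, Prod.ext_iff, Prod.smul_def, smul_eq_mul]
    refine ⟨?_, by simp [mul_neg], by simp [mul_neg]⟩
    simp [hn, map_neg, mul_neg, smul_smul, sub_smul]
    abel
end

section
/- Let B be a unital K-algebra with a strong involution σ and q,r∈K nonzero. Then the algebra B̄(q,r) is flexible if and only if B is flexible. -/
/-- `B̄(q,r)` is flexible if and only if `B` is flexible. -/
theorem stmt17 (K B : Type*) [Field K]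
    [NonAssocRing B] [Module K B] [SMulCommClass K B B] [IsScalarTower K B B]
    (σ : B →ₗ[K] B) (hσmul : ∀ x y : B, σ (x * y) = σ y * σ x)
    (hσone : σ 1 = 1) (hσinv : ∀ x : B, σ (σ x) = x)
    (hσtr : ∀ b : B, b + σ b ∈ Submodule.span K {(1 : B)})
    (hσnr : ∀ b : B, b * σ b ∈ Submodule.span K {(1 : B)})
    (q r : K) (hq : q ≠ 0) (hr : r ≠ 0) :
    (∀ x y : B × B × B, tMul K B σ q r (tMul K B σ q r x y) x =
        tMul K B σ q r x (tMul K B σ q r y x)) ↔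
      (∀ x y : B, x * y * x = x * (y * x)) := by
  constructor
  · intro H x y
    have h := H (x, 0, 0) (y, 0, 0)
    simp only [tMul, map_zero, mul_zero, zero_mul, smul_zero, add_zero, zero_add,
      Prod.mk.injEq] at h
    exact h.1
  · intro hB
    choose τ hτ using fun b : B => Submodule.mem_span_singleton.mp (hσtr b)
    choose ν hν using fun b : B => Submodule.mem_span_singleton.mp (hσnr b)
    have hστ : ∀ b : B, σ b = τ b • 1 - b := fun b => by
      rw [hτ b]; abel
    have flexLin : ∀ u v w : B, (u*v)*w + (w*v)*u = u*(v*w) + w*(v*u) := by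
      intro u v w
      have h3 := hB (u+w) v
      simp only [add_mul, mul_add] at h3
      linear_combination (norm := module) h3 - hB u v - hB w v
    have hμ : ∀ b b' : B, b * σ b' + b' * σ b = (ν (b+b') - ν b - ν b') • (1:B) := by
      intro b b'
      have h := hν (b+b')
      rw [map_add] at h
      simp only [add_mul, mul_add] at h
      linear_combination (norm := module) hν b + hν b' - h
    have swap : ∀ b x : B, (x * σ b) * b = (x * b) * σ b := by
      intro b x
      rw [hστ b]
      simp only [mul_sub, sub_mul, smul_mul_assoc, mul_smul_comm, mul_one, one_mul]
    have central : ∀ b : B, σ b * b = ν b • (1:B) := by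
      intro b
      have h := hν b
      rw [hστ b] at h ⊢
      simp only [mul_sub, sub_mul, smul_mul_assoc, one_mul, mul_one, mul_smul_comm] at h ⊢
      linear_combination (norm := module) -h
    have step1 : ∀ b x : B, b * (σ b * x) = (x * b) * σ b := by
      intro b x
      have F := flexLin b (σ b) x
      rw [central b, ← hν b] at F
      simp only [smul_mul_assoc, one_mul, mul_smul_comm, mul_one] at F
      linear_combination (norm := module) swap b x - F
    have dagger : ∀ a b b' : B, (b'*σ b)*a + b*(σ b'*a) = a*(b*σ b') + (a*b')*σ b := by
      intro a b b'
      have F := flexLin b (σ b') a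
      have res : (a*σ b')*b + a*(b'*σ b) = a*(σ b'*b) + (a*b')*σ b := by
        rw [hστ b, hστ b']
        simp only [mul_sub, sub_mul, smul_mul_assoc, mul_smul_comm, mul_one, one_mul]
        module
      have hmL : (b*σ b' + b'*σ b) * a = (ν (b+b') - ν b - ν b') • a := by
        rw [hμ b b', smul_mul_assoc, one_mul]
      have hmR : a * (b*σ b' + b'*σ b) = (ν (b+b') - ν b - ν b') • a := by
        rw [hμ b b', mul_smul_comm, mul_one]
      simp only [add_mul] at hmL
      simp only [mul_add] at hmR
      linear_combination (norm := module) res - F + hmL - hmR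
    have lemB : ∀ a a' b b' : B,
        (b'*σ b)*a + b*(σ b'*a) + b*(σ b*σ a')
          = a*(b*σ b') + (σ a'*b)*σ b + (a*b')*σ b := by
      intro a a' b b'
      linear_combination (norm := module) dagger a b b' + step1 b (σ a')
    have lemA : ∀ a a' b b' : B,
        (σ a'*σ a)*b + a*(σ a*b') + a*(a'*b)
          = σ a*(σ a'*b) + σ a*(a*b') + (a'*a)*b := by
      intro a a' b b'
      rw [hστ a, hστ a']
      simp only [mul_sub, sub_mul, smul_mul_assoc, mul_smul_comm, mul_one, one_mul,
        smul_sub, sub_smul, smul_smul]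
      module
    rintro ⟨a, b, c⟩ ⟨a', b', c'⟩
    simp only [tMul, map_add, map_smul, hσmul, hσinv, Prod.mk.injEq]
    refine ⟨?_, ?_, ?_⟩
    · simp only [mul_add, add_mul, smul_add, smul_mul_assoc, mul_smul_comm]
      linear_combination (norm := module) hB a a' + q • lemB a a' b b' + r • lemB a a' c c'
    · simp only [mul_add, add_mul, smul_add, smul_mul_assoc, mul_smul_comm]
      linear_combination (norm := module) lemA a a' b b'
    · simp only [mul_add, add_mul, smul_add, smul_mul_assoc, mul_smul_comm]
      linear_combination (norm := module) lemA a a' c c'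
end

section
/- Let B be a unital K-algebra with a strong involution σ and q,r∈K nonzero. Then the algebra B̄(q,r) is never alternative: the elements x = v (i.e., 0 + v·1_B + z·0) and y = z (i.e., 0 + v·0 + z·1_B) satisfy (xx)y = qz ≠ 0 = x(xy), so the left alternative law fails in B̄(q,r). -/
/-- `B̄(q,r)` is never alternative: for `x = v` and `y = z` one has
`(xx)y = qz ≠ 0 = x(xy)`, so the left alternative law fails. -/
theorem stmt19 (K B : Type*) [Field K]
    [NonAssocRing B] [Module K B] [SMulCommClass K B B] [IsScalarTower K B B]
    [Nontrivial B]
    (σ : B →ₗ[K] B) (hσmul : ∀ x y : B, σ (x * y) = σ y * σ x)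
    (hσone : σ 1 = 1) (hσinv : ∀ x : B, σ (σ x) = x)
    (hσtr : ∀ b : B, b + σ b ∈ Submodule.span K {(1 : B)})
    (hσnr : ∀ b : B, b * σ b ∈ Submodule.span K {(1 : B)})
    (q r : K) (hq : q ≠ 0) (hr : r ≠ 0) :
    tMul K B σ q r (tMul K B σ q r ((0 : B), (1 : B), (0 : B)) ((0 : B), (1 : B), (0 : B)))
        ((0 : B), (0 : B), (1 : B)) = ((0 : B), (0 : B), q • (1 : B)) ∧
    tMul K B σ q r ((0 : B), (1 : B), (0 : B))
        (tMul K B σ q r ((0 : B), (1 : B), (0 : B)) ((0 : B), (0 : B), (1 : B))) = 0 ∧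
    tMul K B σ q r (tMul K B σ q r ((0 : B), (1 : B), (0 : B)) ((0 : B), (1 : B), (0 : B)))
        ((0 : B), (0 : B), (1 : B)) ≠
      tMul K B σ q r ((0 : B), (1 : B), (0 : B))
        (tMul K B σ q r ((0 : B), (1 : B), (0 : B)) ((0 : B), (0 : B), (1 : B))) := by
  have h1 : tMul K B σ q r (tMul K B σ q r ((0 : B), (1 : B), (0 : B)) ((0 : B), (1 : B), (0 : B)))
      ((0 : B), (0 : B), (1 : B)) = ((0 : B), (0 : B), q • (1 : B)) := by
    simp [tMul, hσone, Prod.ext_iff, mul_smul_comm, smul_mul_assoc]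
  have h2 : tMul K B σ q r ((0 : B), (1 : B), (0 : B))
      (tMul K B σ q r ((0 : B), (1 : B), (0 : B)) ((0 : B), (0 : B), (1 : B))) = 0 := by
    simp [tMul, hσone, Prod.ext_iff]
  refine ⟨h1, h2, ?_⟩
  rw [h1, h2]
  intro h
  have := congrArg (fun p : B × B × B => p.2.2) h
  simp only [Prod.snd_zero] at this
  have h0 : (1 : B) = 0 := by
    have := congrArg (fun b => q⁻¹ • b) this
    simpa [inv_smul_smul₀ hq] using this
  exact one_ne_zero h0
end
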